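/- arXiv:2312.16621 — 8 statements merged into one kernel-verified Lean document; each statement's English description precedes it below -/
import Mathlib

section
/- Let $P_A$ be a real random variable uniformly distributed on $[P_{\min}, P_{\max}]$ with $0 \le P_{\min} < P_{\max}$, and let $\rho_1 > 0$, $\rho_2 \ge 0$, $\sigma^2 \ge 0$. Define the detection error probability $\xi(\Gamma) = \Pr(P_A \rho_1 + \sigma^2 > \Gamma) + \Pr(P_A \rho_1 + \rho_2 + \sigma^2 < \Gamma)$ for $\Gamma \in \mathbb{R}$. Then $\inf_{\Gamma \in \mathbb{R}} \xi(\Gamma) = \max\left(0,\; 1 - \frac{\rho_2}{(P_{\max} - P_{\min})\rho_1}\right)$, and this infimum is attained at $\Gamma^* = \sigma^2 + P_{\max}\rho_1$. -/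
open MeasureTheory

/-- The detection error probability `ξ(Γ) = P_FA(Γ) + P_MD(Γ)` for Willie's
radiometer, with artificial-noise power `P_A` uniform on `[Pmin, Pmax]`, has
infimum `max (0, 1 - ρ2/((Pmax-Pmin)ρ1))` over all thresholds `Γ`, attained at
`Γ* = σ² + Pmax ρ1`. -/
theorem stmt_2
    {Ω : Type*} [MeasurableSpace Ω] (ℙ : Measure Ω) [IsProbabilityMeasure ℙ]
    (Pmin Pmax ρ1 ρ2 σ2 : ℝ)
    (hPmin : 0 ≤ Pmin) (hPP : Pmin < Pmax) (hρ1 : 0 < ρ1) (hρ2 : 0 ≤ ρ2) (hσ2 : 0 ≤ σ2)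
    (PA : Ω → ℝ) (hPAmeas : Measurable PA)
    (hPAlaw : Measure.map PA ℙ =
      (ENNReal.ofReal (Pmax - Pmin))⁻¹ • volume.restrict (Set.Icc Pmin Pmax))
    (ξ : ℝ → ℝ)
    (hξ : ∀ Γ : ℝ, ξ Γ = (ℙ {ω | PA ω * ρ1 + σ2 > Γ}).toReal
        + (ℙ {ω | PA ω * ρ1 + ρ2 + σ2 < Γ}).toReal) :
    (⨅ Γ : ℝ, ξ Γ) = max 0 (1 - ρ2 / ((Pmax - Pmin) * ρ1)) ∧
    ξ (σ2 + Pmax * ρ1) = max 0 (1 - ρ2 / ((Pmax - Pmin) * ρ1)) := by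
  have hL : 0 < Pmax - Pmin := sub_pos.mpr hPP
  set L : ℝ := Pmax - Pmin with hLdef
  have hEne : ENNReal.ofReal L ≠ 0 := by
    simp only [ne_eq, ENNReal.ofReal_eq_zero, not_le]; exact hL
  have hEtop : (ENNReal.ofReal L)⁻¹ ≠ ⊤ := by simp [hEne]
  have hEtoReal : ((ENNReal.ofReal L)⁻¹).toReal = 1 / L := by
    rw [ENNReal.toReal_inv, ENNReal.toReal_ofReal hL.le, one_div]
  -- probability formula
  have hprob : ∀ s : Set ℝ, MeasurableSet s →
      ℙ (PA ⁻¹' s) = (ENNReal.ofReal L)⁻¹ * volume (s ∩ Set.Icc Pmin Pmax) := by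
    intro s hs
    have h1 := Measure.map_apply (μ := ℙ) hPAmeas hs
    rw [hPAlaw, Measure.smul_apply, Measure.restrict_apply hs, smul_eq_mul] at h1
    exact h1.symm
  -- event rewrites
  have hA : ∀ Γ : ℝ, {ω | PA ω * ρ1 + σ2 > Γ} = PA ⁻¹' (Set.Ioi ((Γ - σ2)/ρ1)) := by
    intro Γ; ext ω
    simp only [Set.mem_setOf_eq, Set.mem_preimage, Set.mem_Ioi, div_lt_iff₀ hρ1, gt_iff_lt]
    constructor <;> intro h <;> linarith
  have hB : ∀ Γ : ℝ, {ω | PA ω * ρ1 + ρ2 + σ2 < Γ} = PA ⁻¹' (Set.Iio ((Γ - ρ2 - σ2)/ρ1)) := by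
    intro Γ; ext ω
    simp only [Set.mem_setOf_eq, Set.mem_preimage, Set.mem_Iio, lt_div_iff₀ hρ1]
    constructor <;> intro h <;> linarith
  set V : ℝ := max 0 (1 - ρ2 / (L * ρ1)) with hVdef
  -- value at Γ*
  have hstar : ξ (σ2 + Pmax * ρ1) = V := by
    rw [hξ, hA, hB]
    have hb : (σ2 + Pmax * ρ1 - σ2)/ρ1 = Pmax := by field_simp; ring
    have ha : (σ2 + Pmax * ρ1 - ρ2 - σ2)/ρ1 = Pmax - ρ2/ρ1 := by field_simp; ring
    rw [hb, ha, hprob _ measurableSet_Ioi, hprob _ measurableSet_Iio]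
    have h1 : Set.Ioi Pmax ∩ Set.Icc Pmin Pmax = ∅ := by
      ext x
      simp only [Set.mem_inter_iff, Set.mem_Ioi, Set.mem_Icc, Set.mem_empty_iff_false, iff_false]
      rintro ⟨h1, _, h3⟩; linarith
    have h2 : Set.Iio (Pmax - ρ2/ρ1) ∩ Set.Icc Pmin Pmax = Set.Ico Pmin (Pmax - ρ2/ρ1) := by
      have hd : 0 ≤ ρ2/ρ1 := div_nonneg hρ2 hρ1.le
      ext x; simp only [Set.mem_inter_iff, Set.mem_Iio, Set.mem_Icc, Set.mem_Ico]
      constructor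
      · rintro ⟨h1, h2, h3⟩; exact ⟨h2, h1⟩
      · rintro ⟨h1, h2⟩; exact ⟨h2, h1, by linarith⟩
    rw [h1, h2, measure_empty, mul_zero, ENNReal.toReal_zero, zero_add, Real.volume_Ico,
      ENNReal.toReal_mul, hEtoReal, ENNReal.toReal_ofReal']
    have hcalc : Pmax - ρ2/ρ1 - Pmin = L - ρ2/ρ1 := by rw [hLdef]; ring
    rw [hcalc, hVdef]
    rcases le_or_gt ρ2 (L * ρ1) with h | h
    · have h3 : ρ2/ρ1 ≤ L := by rw [div_le_iff₀ hρ1]; linarith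
      have h4 : 0 ≤ ρ2 / (L * ρ1) := div_nonneg hρ2 (by positivity)
      have h5 : ρ2 / (L * ρ1) ≤ 1 := by
        rw [div_le_one (by positivity)]; linarith
      rw [max_eq_left (by linarith), max_eq_right (by linarith)]
      field_simp
    · have h3 : L < ρ2/ρ1 := by rw [lt_div_iff₀ hρ1]; linarith
      have h5 : 1 < ρ2 / (L * ρ1) := by
        rw [lt_div_iff₀ (by positivity : (0:ℝ) < L * ρ1)]; linarith
      rw [max_eq_right (by linarith), max_eq_left (by linarith), mul_zero]
  -- lower bound
  have hlow : ∀ Γ : ℝ, V ≤ ξ Γ := by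
    intro Γ
    set a : ℝ := (Γ - ρ2 - σ2)/ρ1 with hadef
    set b : ℝ := (Γ - σ2)/ρ1 with hbdef
    have hab : a ≤ b := (div_le_div_iff_of_pos_right hρ1).mpr (by linarith)
    have hAB : ξ Γ = 1 - (ℙ (PA ⁻¹' Set.Icc a b)).toReal := by
      rw [hξ, hA, hB]
      have hdisj : Disjoint (PA ⁻¹' Set.Ioi b) (PA ⁻¹' Set.Iio a) := by
        refine Disjoint.preimage PA (Set.disjoint_left.mpr ?_)
        intro x hx hx'
        simp only [Set.mem_Ioi] at hx
        simp only [Set.mem_Iio] at hx'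
        linarith
      have hmB : MeasurableSet (PA ⁻¹' Set.Iio a) := hPAmeas measurableSet_Iio
      have hmC : MeasurableSet (PA ⁻¹' Set.Icc a b) := hPAmeas measurableSet_Icc
      have hcompl : (PA ⁻¹' Set.Icc a b)ᶜ = PA ⁻¹' Set.Ioi b ∪ PA ⁻¹' Set.Iio a := by
        ext ω
        simp only [Set.mem_compl_iff, Set.mem_preimage, Set.mem_Icc, Set.mem_union,
          Set.mem_Ioi, Set.mem_Iio, not_and_or, not_le]
        tauto
      have h1 : ℙ (PA ⁻¹' Set.Ioi b) + ℙ (PA ⁻¹' Set.Iio a) = 1 - ℙ (PA ⁻¹' Set.Icc a b) := by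
        rw [← measure_union hdisj hmB, ← hcompl, prob_compl_eq_one_sub hmC]
      rw [← ENNReal.toReal_add (measure_ne_top ℙ _) (measure_ne_top ℙ _), h1,
        ENNReal.toReal_sub_of_le prob_le_one ENNReal.one_ne_top, ENNReal.toReal_one]
    have hCle : (ℙ (PA ⁻¹' Set.Icc a b)).toReal ≤ ρ2 / (L * ρ1) := by
      rw [hprob _ measurableSet_Icc]
      have h2 : (ENNReal.ofReal L)⁻¹ * volume (Set.Icc a b ∩ Set.Icc Pmin Pmax)
          ≤ (ENNReal.ofReal L)⁻¹ * ENNReal.ofReal (ρ2/ρ1) := by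
        apply mul_le_mul_right ?_
        calc volume (Set.Icc a b ∩ Set.Icc Pmin Pmax) ≤ volume (Set.Icc a b) :=
              measure_mono Set.inter_subset_left
          _ = ENNReal.ofReal (b - a) := Real.volume_Icc
          _ = ENNReal.ofReal (ρ2/ρ1) := by
              congr 1
              rw [hbdef, hadef]
              field_simp
              ring
      have h3 := ENNReal.toReal_mono ?_ h2
      · refine h3.trans_eq ?_
        rw [ENNReal.toReal_mul, hEtoReal, ENNReal.toReal_ofReal (div_nonneg hρ2 hρ1.le)]
        field_simp
      · exact ENNReal.mul_ne_top hEtop ENNReal.ofReal_ne_top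
    rw [hVdef]
    apply max_le
    · rw [hξ]; positivity
    · rw [hAB]; linarith
  refine ⟨?_, hstar⟩
  apply le_antisymm
  · exact hstar ▸ ciInf_le ⟨V, Set.forall_mem_range.mpr hlow⟩ (σ2 + Pmax * ρ1)
  · exact le_ciInf hlow
end

section
/- Let $N \ge 1$, let $A_1, A_2 \in \mathbb{C}^{N \times N}$ be Hermitian matrices, $b_1, b_2 \in \mathbb{C}^N$, and $c_1, c_2 \in \mathbb{R}$. Define $f_i(x) = x^H A_i x + 2\,\mathrm{Re}(b_i^H x) + c_i$ for $x \in \mathbb{C}^N$, $i = 1,2$. Suppose there exists $x_0 \in \mathbb{C}^N$ with $f_1(x_0) < 0$ (Slater condition). Then the implication "$f_1(x) \le 0 \Rightarrow f_2(x) \le 0$ for all $x \in \mathbb{C}^N$" holds if and only if there exists $\lambda \ge 0$ such that the $(N+1)\times(N+1)$ Hermitian block matrix $\lambda \begin{bmatrix} A_1 & b_1 \\ b_1^H & c_1 \end{bmatrix} - \begin{bmatrix} A_2 & b_2 \\ b_2^H & c_2 \end{bmatrix}$ is positive semidefinite. -/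
set_option linter.unusedSectionVars false
set_option maxHeartbeats 1000000

open Matrix ComplexOrder



-- sesquilinear form helpers
variable {m : Type*} [Fintype m]

lemma sesq_smul (M : Matrix m m ℂ) (α : ℂ) (w : m → ℂ) :
    star (α • w) ⬝ᵥ M *ᵥ (α • w) = star α * α * (star w ⬝ᵥ M *ᵥ w) := by
  simp [star_smul, smul_dotProduct, Matrix.mulVec_smul, dotProduct_smul, smul_smul, mul_comm, mul_assoc, mul_left_comm]

lemma sesq_expand (M : Matrix m m ℂ) (α β : ℂ) (x y : m → ℂ) :
    star (α • x + β • y) ⬝ᵥ M *ᵥ (α • x + β • y) =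
      star α * α * (star x ⬝ᵥ M *ᵥ x) + star α * β * (star x ⬝ᵥ M *ᵥ y)
      + star β * α * (star y ⬝ᵥ M *ᵥ x) + star β * β * (star y ⬝ᵥ M *ᵥ y) := by
  simp [star_add, star_smul, Matrix.mulVec_add, Matrix.mulVec_smul, dotProduct_add,
    add_dotProduct, smul_dotProduct, dotProduct_smul, smul_smul]
  ring

lemma herm_conj {M : Matrix m m ℂ} (h : M.IsHermitian) (w : m → ℂ) :
    (starRingEnd ℂ) (star w ⬝ᵥ M *ᵥ w) = star w ⬝ᵥ M *ᵥ w := by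
  have : star (star w ⬝ᵥ M *ᵥ w) = star (M *ᵥ w) ⬝ᵥ star (star w) := by
    rw [star_dotProduct]; simp
  rw [← RCLike.star_def, this, star_star, star_mulVec, ← Matrix.dotProduct_mulVec, h.eq]

lemma herm_im {M : Matrix m m ℂ} (h : M.IsHermitian) (w : m → ℂ) :
    (star w ⬝ᵥ M *ᵥ w).im = 0 :=
  Complex.conj_eq_iff_im.mp (herm_conj h w)


lemma range_quad_convex (M : Matrix m m ℂ) :
    Convex ℝ (Set.range fun w : m → ℂ => star w ⬝ᵥ M *ᵥ w) := by
  rintro _ ⟨x, rfl⟩ _ ⟨y, rfl⟩ a b ha hb hab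
  set p := star x ⬝ᵥ M *ᵥ x with hp
  set q := star y ⬝ᵥ M *ᵥ y with hq
  by_cases hpq : p = q
  · refine ⟨x, ?_⟩
    show p = a • p + b • q
    rw [← hpq, ← add_smul, hab, one_smul]
  set u := star x ⬝ᵥ M *ᵥ y
  set v := star y ⬝ᵥ M *ᵥ x
  set g : ℝ → ℂ := fun θ => Complex.exp (θ * Complex.I) * u + Complex.exp (-θ * Complex.I) * v with hg
  set h : ℝ → ℝ := fun θ => ((g θ) / (q - p)).im with hh
  have hcont : Continuous h := by
    apply Complex.continuous_im.comp
    apply Continuous.div_const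
    fun_prop
  have hanti : h Real.pi = - h 0 := by
    have e1 : Complex.exp ((Real.pi : ℂ) * Complex.I) = -1 := Complex.exp_pi_mul_I
    have hgpi : g Real.pi = - g 0 := by
      simp only [hg, e1]
      rw [show (-(Real.pi:ℂ)) * Complex.I = -((Real.pi:ℂ) * Complex.I) by ring,
        Complex.exp_neg, e1]
      simp
      ring
    simp [hh, hgpi, neg_div]
  have hzero : ∃ θ, h θ = 0 := by
    rcases le_total (h 0) 0 with hle | hle
    · have hmem0 : (0:ℝ) ∈ Set.Icc (h 0) (h Real.pi) := ⟨hle, by rw [hanti]; linarith⟩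
      obtain ⟨θ, _, hθ⟩ := intermediate_value_Icc (le_of_lt Real.pi_pos) hcont.continuousOn hmem0
      exact ⟨θ, hθ⟩
    · have hmem0 : (0:ℝ) ∈ Set.Icc (h Real.pi) (h 0) := ⟨by rw [hanti]; linarith, hle⟩
      obtain ⟨θ, _, hθ⟩ := intermediate_value_Icc' (le_of_lt Real.pi_pos) hcont.continuousOn hmem0
      exact ⟨θ, hθ⟩
  obtain ⟨θ, hθ⟩ := hzero
  set c : ℝ := ((g θ) / (q - p)).re with hc
  have hgc : g θ = (c : ℂ) * (q - p) := by
    have hne : q - p ≠ 0 := sub_ne_zero.mpr (Ne.symm hpq)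
    have hdiv : (g θ) / (q - p) = (c : ℂ) := by
      apply Complex.ext
      · simp [hc]
      · simpa using hθ
    field_simp at hdiv
    linear_combination hdiv
  set ψ : ℝ → ℝ := fun s => Real.cos s ^ 2 - c * Real.cos s * Real.sin s with hψ
  have hψcont : Continuous ψ := by fun_prop
  have hψ0 : ψ 0 = 1 := by simp [hψ]
  have hψpi2 : ψ (Real.pi / 2) = 0 := by simp [hψ]
  have hmem : a ∈ Set.Icc (ψ (Real.pi/2)) (ψ 0) := by
    rw [hψ0, hψpi2]; exact ⟨ha, by linarith⟩
  obtain ⟨s, _, hs⟩ := intermediate_value_Icc' (by positivity : (0:ℝ) ≤ Real.pi/2)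
    hψcont.continuousOn hmem
  refine ⟨(Real.cos s : ℂ) • x + ((Real.sin s : ℂ) * Complex.exp (θ * Complex.I)) • y, ?_⟩
  show star (_ + _) ⬝ᵥ M *ᵥ (_ + _) = a • p + b • q
  rw [sesq_expand]
  have hstarcos : star (Real.cos s : ℂ) = (Real.cos s : ℂ) := by
    rw [RCLike.star_def]; exact Complex.conj_ofReal _
  have hconjexp : (starRingEnd ℂ) (Complex.exp ((θ:ℂ) * Complex.I)) = Complex.exp (-θ * Complex.I) := by
    rw [← Complex.exp_conj, RingHom.map_mul, Complex.conj_ofReal, Complex.conj_I]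
    congr 1
    ring
  have hstarsin : star ((Real.sin s:ℂ) * Complex.exp (θ * Complex.I)) =
      (Real.sin s:ℂ) * Complex.exp (-θ * Complex.I) := by
    rw [RCLike.star_def, RingHom.map_mul, Complex.conj_ofReal, hconjexp]
  rw [hstarcos, hstarsin]
  have hexp : Complex.exp (-θ * Complex.I) * Complex.exp (θ * Complex.I) = 1 := by
    rw [← Complex.exp_add]; ring_nf; exact Complex.exp_zero
  have hkey : (Real.cos s:ℂ) * ((Real.sin s:ℂ) * Complex.exp (θ * Complex.I)) * u
      + (Real.sin s:ℂ) * Complex.exp (-θ * Complex.I) * ((Real.cos s:ℂ)) * v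
      = (Real.cos s:ℂ) * (Real.sin s:ℂ) * ((c:ℂ) * (q - p)) := by
    rw [← hgc]; simp only [hg]; ring
  have hsum : (Real.cos s:ℂ)^2 + (Real.sin s:ℂ)^2 = 1 := by
    exact_mod_cast Real.cos_sq_add_sin_sq s
  have hsin2 : (Real.sin s:ℂ) * Complex.exp (-θ * Complex.I) * ((Real.sin s:ℂ) * Complex.exp (θ * Complex.I)) = (Real.sin s:ℂ)^2 := by
    calc (Real.sin s:ℂ) * Complex.exp (-θ * Complex.I) * ((Real.sin s:ℂ) * Complex.exp (θ * Complex.I))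
        = (Real.sin s:ℂ)^2 * (Complex.exp (-θ * Complex.I) * Complex.exp (θ * Complex.I)) := by ring
      _ = (Real.sin s:ℂ)^2 := by rw [hexp, mul_one]
  have hA : (Real.cos s:ℂ)^2 - (c:ℂ) * (Real.cos s:ℂ) * (Real.sin s:ℂ) = (a:ℂ) := by
    simp only [hψ] at hs
    exact_mod_cast hs
  have hB : (a : ℂ) + (b : ℂ) = 1 := by exact_mod_cast congrArg Complex.ofReal hab
  rw [Complex.real_smul, Complex.real_smul]
  linear_combination hkey + q * hsin2 + p * hA + q * hsum - q * hA - q * hB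


lemma homog_slemma (M1 M2 : Matrix m m ℂ) (h1 : M1.IsHermitian) (h2 : M2.IsHermitian)
    (himp : ∀ w : m → ℂ, (star w ⬝ᵥ M1 *ᵥ w).re ≤ 0 → (star w ⬝ᵥ M2 *ᵥ w).re ≤ 0)
    (hs : ∃ w0 : m → ℂ, (star w0 ⬝ᵥ M1 *ᵥ w0).re < 0) :
    ∃ lam : ℝ, 0 ≤ lam ∧ ∀ w : m → ℂ,
      0 ≤ lam * (star w ⬝ᵥ M1 *ᵥ w).re - (star w ⬝ᵥ M2 *ᵥ w).re := by
  obtain ⟨w0, hw0⟩ := hs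
  set M : Matrix m m ℂ := M1 + Complex.I • M2 with hM
  set Q1 : (m → ℂ) → ℝ := fun w => (star w ⬝ᵥ M1 *ᵥ w).re with hQ1
  set Q2 : (m → ℂ) → ℝ := fun w => (star w ⬝ᵥ M2 *ᵥ w).re with hQ2
  have hφ : ∀ w : m → ℂ, star w ⬝ᵥ M *ᵥ w = Complex.mk (Q1 w) (Q2 w) := by
    intro w
    have hsplit : star w ⬝ᵥ M *ᵥ w
        = (star w ⬝ᵥ M1 *ᵥ w) + Complex.I * (star w ⬝ᵥ M2 *ᵥ w) := by
      simp [hM, Matrix.add_mulVec, Matrix.smul_mulVec, dotProduct_add, dotProduct_smul,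
        smul_eq_mul]
    rw [hsplit]
    apply Complex.ext
    · simp [hQ1, herm_im h2 w]
    · simp [hQ2, herm_im h1 w, herm_im h2 w]
  set S : Set ℂ := Set.range fun w : m → ℂ => star w ⬝ᵥ M *ᵥ w with hS
  set U : Set ℂ := {z : ℂ | z.re < 0 ∧ 0 < z.im} with hU
  have hUconv : Convex ℝ U := by
    have : U = (Complex.reCLM ⁻¹' Set.Iio 0) ∩ (Complex.imCLM ⁻¹' Set.Ioi 0) := by
      ext z; simp [hU]
    rw [this]
    exact (convex_Iio (0:ℝ)).linear_preimage Complex.reCLM.toLinearMap |>.inter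
      ((convex_Ioi (0:ℝ)).linear_preimage Complex.imCLM.toLinearMap)
  have hUopen : IsOpen U := by
    have : U = (Complex.reCLM ⁻¹' Set.Iio 0) ∩ (Complex.imCLM ⁻¹' Set.Ioi 0) := by
      ext z; simp [hU]
    rw [this]
    exact (isOpen_Iio.preimage Complex.reCLM.continuous).inter
      (isOpen_Ioi.preimage Complex.imCLM.continuous)
  have hdisj : Disjoint U S := by
    rw [Set.disjoint_left]
    rintro z ⟨hre, him⟩ ⟨w, rfl⟩
    have hre' : Q1 w < 0 := by simpa [hφ w] using hre
    have him' : 0 < Q2 w := by simpa [hφ w] using him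
    exact absurd (himp w hre'.le) (not_le.mpr him')
  obtain ⟨f, u, hfU, hfS⟩ := geometric_hahn_banach_open hUconv hUopen (range_quad_convex M) hdisj
  set α : ℝ := f 1 with hα
  set β : ℝ := f Complex.I with hβ
  have hfz : ∀ z : ℂ, f z = α * z.re + β * z.im := by
    intro z
    have hz : z.re • (1:ℂ) + z.im • Complex.I = z := by
      rw [Complex.real_smul, Complex.real_smul, mul_one]
      exact Complex.re_add_im z
    calc f z = f (z.re • (1:ℂ) + z.im • Complex.I) := by rw [hz]
      _ = α * z.re + β * z.im := by
          rw [map_add, f.map_smul, f.map_smul, smul_eq_mul, smul_eq_mul]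
          ring
  -- u ≤ 0 (0 ∈ S) and u ≥ 0
  have h0S : (0:ℂ) ∈ S := ⟨0, by simp⟩
  have hu0 : u ≤ 0 := by simpa using hfS 0 h0S
  have hUval : ∀ r s' : ℝ, r < 0 → 0 < s' → α * r + β * s' < u := by
    intro r s' hr hs'
    have : (Complex.mk r s') ∈ U := ⟨hr, hs'⟩
    have := hfU _ this
    rwa [hfz] at this
  have hu0' : 0 ≤ u := by
    by_contra hu
    push_neg at hu
    rcases le_or_gt 0 (β - α) with hba | hba
    · have := hUval (-1 * 1) 1 (by norm_num) one_pos
      -- value = -α + β ≥ 0 > u contradiction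
      nlinarith [hUval (-1) 1 (by norm_num) one_pos]
    · -- β - α < 0; take ε = u / (β - α) / 2 > 0
      have hε : 0 < u / (β - α) / 2 := by
        apply div_pos _ two_pos
        exact div_pos_of_neg_of_neg hu hba
      have hval := hUval (-(u / (β - α) / 2)) (u / (β - α) / 2) (by linarith) hε
      have : α * (-(u / (β - α) / 2)) + β * (u / (β - α) / 2) = (β - α) * (u / (β - α) / 2) := by ring
      rw [this] at hval
      have hne : β - α ≠ 0 := ne_of_lt hba
      have : (β - α) * (u / (β - α) / 2) = u / 2 := by field_simp
      rw [this] at hval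
      linarith
  have hu : u = 0 := le_antisymm hu0 hu0'
  subst hu
  -- sign conditions
  have hαβ : ∀ r s' : ℝ, r < 0 → 0 < s' → α * r + β * s' < 0 := hUval
  have hα0 : 0 ≤ α := by
    by_contra hc
    push_neg at hc
    set ε : ℝ := -α / (2 * (|β| + 1)) with hε
    have hεpos : 0 < ε := div_pos (by linarith) (by positivity)
    have hval := hαβ (-1) ε (by norm_num) hεpos
    have hkey : (|β| + 1) * ε = -α / 2 := by
      rw [hε]; field_simp
    have hβε : -(|β| + 1) * ε ≤ β * ε :=
      mul_le_mul_of_nonneg_right (by linarith [neg_abs_le β]) hεpos.le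
    linarith
  have hβ0 : β ≤ 0 := by
    by_contra hc
    push_neg at hc
    set ε : ℝ := β / (2 * (|α| + 1)) with hε
    have hεpos : 0 < ε := div_pos hc (by positivity)
    have hval := hαβ (-ε) 1 (by linarith) one_pos
    have hkey : (|α| + 1) * ε = β / 2 := by
      rw [hε]; field_simp
    have hαε : α * ε ≤ (|α| + 1) * ε :=
      mul_le_mul_of_nonneg_right (by linarith [le_abs_self α]) hεpos.le
    linarith
  have hSval : ∀ w : m → ℂ, 0 ≤ α * Q1 w + β * Q2 w := by
    intro w
    have hv := hfS _ ⟨w, rfl⟩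
    rw [hfz] at hv
    simpa [hφ w] using hv
  have hβne : β < 0 := by
    rcases lt_or_eq_of_le hβ0 with h | h
    · exact h
    · exfalso
      have h1' := hSval w0
      rw [h, zero_mul, add_zero] at h1'
      have hα0' : α = 0 := by
        by_contra hne
        have hpos : 0 < α := lt_of_le_of_ne hα0 (Ne.symm hne)
        have := mul_neg_of_pos_of_neg hpos hw0
        linarith
      have hcontra := hαβ (-1) 1 (by norm_num) one_pos
      rw [hα0', h] at hcontra
      norm_num at hcontra
  have hβpos : 0 < -β := by linarith
  refine ⟨α / (-β), div_nonneg hα0 hβpos.le, ?_⟩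
  intro w
  have h1' := hSval w
  have key : (α * Q1 w + β * Q2 w) / (-β) = α / (-β) * Q1 w - Q2 w := by
    field_simp [ne_of_lt hβne]
    ring
  have hfin : 0 ≤ α / (-β) * Q1 w - Q2 w := key ▸ div_nonneg h1' hβpos.le
  exact hfin


noncomputable def BMat (N : ℕ) (A : Matrix (Fin N) (Fin N) ℂ) (b : Fin N → ℂ) (c : ℝ) :
    Matrix (Fin N ⊕ Fin 1) (Fin N ⊕ Fin 1) ℂ :=
  Matrix.fromBlocks A (Matrix.of fun i (_ : Fin 1) => b i)
    (Matrix.of fun (_ : Fin 1) j => star (b j)) (Matrix.of fun (_ : Fin 1) (_ : Fin 1) => (c : ℂ))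

lemma star_sum_elim {n : Type*} (x : m → ℂ) (y : n → ℂ) :
    star (Sum.elim x y) = Sum.elim (star x) (star y) :=
  funext fun i => by cases i <;> rfl

lemma BMat_quad {N : ℕ} (A : Matrix (Fin N) (Fin N) ℂ) (b : Fin N → ℂ) (c : ℝ)
    (x : Fin N → ℂ) (τ : ℂ) :
    star (Sum.elim x fun _ : Fin 1 => τ) ⬝ᵥ (BMat N A b c) *ᵥ (Sum.elim x fun _ : Fin 1 => τ)
      = star x ⬝ᵥ A *ᵥ x + τ * star (star b ⬝ᵥ x) + star τ * (star b ⬝ᵥ x)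
        + star τ * τ * c := by
  rw [BMat, fromBlocks_mulVec, star_sum_elim, sumElim_dotProduct_sumElim]
  rw [Sum.elim_comp_inl, Sum.elim_comp_inr]
  have hB : (Matrix.of fun i (_ : Fin 1) => b i) *ᵥ (fun _ => τ) = τ • b := by
    funext i; simp [Matrix.mulVec, dotProduct, mul_comm]
  have hC : (Matrix.of fun (_ : Fin 1) j => star (b j)) *ᵥ x = fun _ => star b ⬝ᵥ x := by
    funext i; simp [Matrix.mulVec, dotProduct]
  have hD : (Matrix.of fun (_ : Fin 1) (_ : Fin 1) => (c:ℂ)) *ᵥ (fun _ => τ) = fun _ => c * τ := by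
    funext i; simp [Matrix.mulVec, dotProduct]
  rw [hB, hC, hD]
  have hstarτ : star (fun _ : Fin 1 => τ) = fun _ : Fin 1 => star τ := rfl
  rw [hstarτ]
  have hdot1 : (fun _ : Fin 1 => star τ) ⬝ᵥ ((fun _ => star b ⬝ᵥ x) + fun _ => c * τ)
      = star τ * (star b ⬝ᵥ x) + star τ * (c * τ) := by
    simp [dotProduct, Fin.sum_univ_one, mul_add]
  rw [dotProduct_add, dotProduct_smul, hdot1]
  have hxb : star x ⬝ᵥ b = star (star b ⬝ᵥ x) := star_dotProduct x b
  rw [smul_eq_mul, hxb]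
  ring

lemma BMat_one {N : ℕ} (A : Matrix (Fin N) (Fin N) ℂ) (b : Fin N → ℂ) (c : ℝ)
    (x : Fin N → ℂ) :
    (star (Sum.elim x fun _ : Fin 1 => (1:ℂ)) ⬝ᵥ
        (BMat N A b c) *ᵥ (Sum.elim x fun _ : Fin 1 => (1:ℂ))).re
      = (star x ⬝ᵥ A *ᵥ x).re + 2 * (star b ⬝ᵥ x).re + c := by
  rw [BMat_quad]
  simp [Complex.add_re]
  ring

lemma BMat_zero {N : ℕ} (A : Matrix (Fin N) (Fin N) ℂ) (b : Fin N → ℂ) (c : ℝ)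
    (x : Fin N → ℂ) :
    star (Sum.elim x fun _ : Fin 1 => (0:ℂ)) ⬝ᵥ
        (BMat N A b c) *ᵥ (Sum.elim x fun _ : Fin 1 => (0:ℂ))
      = star x ⬝ᵥ A *ᵥ x := by
  rw [BMat_quad]
  simp

lemma BMat_herm {N : ℕ} {A : Matrix (Fin N) (Fin N) ℂ} (hA : A.IsHermitian)
    (b : Fin N → ℂ) (c : ℝ) : (BMat N A b c).IsHermitian := by
  have hCB : (Matrix.of fun (_ : Fin 1) j => star (b j))ᴴ = Matrix.of fun i (_ : Fin 1) => b i := by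
    ext i j; simp [Matrix.conjTranspose_apply]
  have hBC : (Matrix.of fun i (_ : Fin 1) => b i)ᴴ = Matrix.of fun (_ : Fin 1) j => star (b j) := by
    ext i j; simp [Matrix.conjTranspose_apply]
  have hD : (Matrix.of fun (_ : Fin 1) (_ : Fin 1) => (c:ℂ))ᴴ
      = Matrix.of fun (_ : Fin 1) (_ : Fin 1) => (c:ℂ) := by
    ext i j; simp [Matrix.conjTranspose_apply, Complex.conj_ofReal]
  show (BMat N A b c)ᴴ = BMat N A b c
  rw [BMat, fromBlocks_conjTranspose, hCB, hBC, hD, hA.eq]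

lemma herm_real_smul {M : Matrix m m ℂ} (h : M.IsHermitian) (r : ℝ) :
    (r • M).IsHermitian := by
  show (r • M)ᴴ = r • M
  rw [Matrix.conjTranspose_smul, star_trivial, h.eq]

lemma herm_cross {A : Matrix m m ℂ} (hA : A.IsHermitian) (x0 w : m → ℂ) :
    (star w ⬝ᵥ A *ᵥ x0).re = (star x0 ⬝ᵥ A *ᵥ w).re := by
  have key : star (star x0 ⬝ᵥ A *ᵥ w) = star w ⬝ᵥ A *ᵥ x0 := by
    rw [star_dotProduct x0 (A *ᵥ w), star_star, star_mulVec, ← Matrix.dotProduct_mulVec, hA.eq]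
  rw [← key, Complex.star_def, Complex.conj_re]

lemma quad_add {A : Matrix m m ℂ} (hA : A.IsHermitian) (b : m → ℂ) (c : ℝ) (x0 w : m → ℂ) :
    (star (x0 + w) ⬝ᵥ A *ᵥ (x0 + w)).re + 2 * (star b ⬝ᵥ (x0 + w)).re + c
      = ((star x0 ⬝ᵥ A *ᵥ x0).re + 2 * (star b ⬝ᵥ x0).re + c)
        + 2 * (star x0 ⬝ᵥ A *ᵥ w + star b ⬝ᵥ w).re + (star w ⬝ᵥ A *ᵥ w).re := by
  rw [star_add, add_dotProduct, Matrix.mulVec_add, dotProduct_add, dotProduct_add,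
    dotProduct_add]
  simp only [Complex.add_re]
  rw [herm_cross hA x0 w]
  ring
lemma quad_line {A : Matrix m m ℂ} (hA : A.IsHermitian) (b x0 x : m → ℂ) (c s : ℝ) (ζ : ℂ)
    (hζζ : star ζ * ζ = 1) :
    (star (x0 + ((s:ℂ)*ζ) • x) ⬝ᵥ A *ᵥ (x0 + ((s:ℂ)*ζ) • x)).re
      + 2 * (star b ⬝ᵥ (x0 + ((s:ℂ)*ζ) • x)).re + c
    = ((star x0 ⬝ᵥ A *ᵥ x0).re + 2 * (star b ⬝ᵥ x0).re + c)
      + 2 * s * (ζ * (star x0 ⬝ᵥ A *ᵥ x + star b ⬝ᵥ x)).re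
      + s^2 * (star x ⬝ᵥ A *ᵥ x).re := by
  rw [quad_add hA b c x0 (((s:ℂ)*ζ) • x)]
  have hlin : star x0 ⬝ᵥ A *ᵥ (((s:ℂ)*ζ) • x) + star b ⬝ᵥ (((s:ℂ)*ζ) • x)
      = ((s:ℂ)*ζ) * (star x0 ⬝ᵥ A *ᵥ x + star b ⬝ᵥ x) := by
    rw [Matrix.mulVec_smul, dotProduct_smul, dotProduct_smul, smul_eq_mul, smul_eq_mul]
    ring
  rw [hlin]
  have hss : star ((s:ℂ)*ζ) * ((s:ℂ)*ζ) = ((s^2 : ℝ) : ℂ) := by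
    have h1 : star ((s:ℂ)*ζ) = (s:ℂ) * star ζ := by
      rw [star_mul', Complex.star_def, Complex.conj_ofReal]
    rw [h1]
    have : (s:ℂ) * star ζ * ((s:ℂ)*ζ) = (s:ℂ)^2 * (star ζ * ζ) := by ring
    rw [this, hζζ, mul_one]
    push_cast
    ring
  have hquad : star (((s:ℂ)*ζ) • x) ⬝ᵥ A *ᵥ (((s:ℂ)*ζ) • x)
      = ((s^2 : ℝ) : ℂ) * (star x ⬝ᵥ A *ᵥ x) := by
    rw [sesq_smul, hss]
  rw [hquad, Complex.re_ofReal_mul, mul_assoc, Complex.re_ofReal_mul]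
  ring
/-- Complex S-procedure (S-lemma): for Hermitian quadratic functions
`fᵢ(x) = xᴴ Aᵢ x + 2 Re(bᵢᴴ x) + cᵢ` on `ℂ^N` satisfying the Slater
condition, the implication `f₁(x) ≤ 0 → f₂(x) ≤ 0` holds for all `x` iff
there is `λ ≥ 0` making the block matrix
`λ [[A₁, b₁],[b₁ᴴ, c₁]] - [[A₂, b₂],[b₂ᴴ, c₂]]` positive semidefinite. -/
theorem stmt_4
    (N : ℕ) (hN : 1 ≤ N)
    (A1 A2 : Matrix (Fin N) (Fin N) ℂ) (hA1 : A1.IsHermitian) (hA2 : A2.IsHermitian)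
    (b1 b2 : Fin N → ℂ) (c1 c2 : ℝ)
    (f1 f2 : (Fin N → ℂ) → ℝ)
    (hf1 : ∀ x : Fin N → ℂ,
      f1 x = (star x ⬝ᵥ A1 *ᵥ x).re + 2 * (star b1 ⬝ᵥ x).re + c1)
    (hf2 : ∀ x : Fin N → ℂ,
      f2 x = (star x ⬝ᵥ A2 *ᵥ x).re + 2 * (star b2 ⬝ᵥ x).re + c2)
    (slater : ∃ x0 : Fin N → ℂ, f1 x0 < 0) :
    (∀ x : Fin N → ℂ, f1 x ≤ 0 → f2 x ≤ 0) ↔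
      ∃ lam : ℝ, 0 ≤ lam ∧
        (lam • Matrix.fromBlocks A1
            (Matrix.of fun i (_ : Fin 1) => b1 i)
            (Matrix.of fun (_ : Fin 1) j => star (b1 j))
            (Matrix.of fun (_ : Fin 1) (_ : Fin 1) => (c1 : ℂ))
          - Matrix.fromBlocks A2
            (Matrix.of fun i (_ : Fin 1) => b2 i)
            (Matrix.of fun (_ : Fin 1) j => star (b2 j))
            (Matrix.of fun (_ : Fin 1) (_ : Fin 1) => (c2 : ℂ))).PosSemidef := by
  have hBM1 : Matrix.fromBlocks A1
      (Matrix.of fun i (_ : Fin 1) => b1 i)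
      (Matrix.of fun (_ : Fin 1) j => star (b1 j))
      (Matrix.of fun (_ : Fin 1) (_ : Fin 1) => (c1 : ℂ)) = BMat N A1 b1 c1 := rfl
  have hBM2 : Matrix.fromBlocks A2
      (Matrix.of fun i (_ : Fin 1) => b2 i)
      (Matrix.of fun (_ : Fin 1) j => star (b2 j))
      (Matrix.of fun (_ : Fin 1) (_ : Fin 1) => (c2 : ℂ)) = BMat N A2 b2 c2 := rfl
  rw [hBM1, hBM2]
  have hherm1 := BMat_herm hA1 b1 c1
  have hherm2 := BMat_herm hA2 b2 c2
  constructor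
  · -- forward direction
    intro himp
    obtain ⟨x0, hx0⟩ := slater
    -- homogeneous implication
    have hhom : ∀ w : Fin N ⊕ Fin 1 → ℂ,
        (star w ⬝ᵥ (BMat N A1 b1 c1) *ᵥ w).re ≤ 0 →
        (star w ⬝ᵥ (BMat N A2 b2 c2) *ᵥ w).re ≤ 0 := by
      intro w hw
      set τ : ℂ := w (Sum.inr 0) with hτ
      set x : Fin N → ℂ := w ∘ Sum.inl with hx
      have hwx : w = Sum.elim x (fun _ : Fin 1 => τ) := by
        funext i
        cases i with
        | inl i => rfl
        | inr j =>
          have hj : j = 0 := Subsingleton.elim j 0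
          subst hj; rfl
      by_cases hτ0 : τ = 0
      · -- τ = 0 : limit argument
        rw [hwx, hτ0, BMat_zero] at hw
        rw [hwx, hτ0]
        rw [show (star (Sum.elim x fun _ : Fin 1 => (0:ℂ)) ⬝ᵥ
            (BMat N A2 b2 c2) *ᵥ (Sum.elim x fun _ : Fin 1 => (0:ℂ)))
            = star x ⬝ᵥ A2 *ᵥ x from BMat_zero A2 b2 c2 x]
        by_contra hrr
        push_neg at hrr
        set κ1 : ℂ := star x0 ⬝ᵥ A1 *ᵥ x + star b1 ⬝ᵥ x with hκ1
        set κ2 : ℂ := star x0 ⬝ᵥ A2 *ᵥ x + star b2 ⬝ᵥ x with hκ2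
        set ζ : ℂ := if 0 ≤ κ1.re then (-1:ℂ) else 1 with hζ
        have hζζ : star ζ * ζ = 1 := by rw [hζ]; split <;> simp
        have hζκ : (ζ * κ1).re ≤ 0 := by
          rw [hζ]; split
          · simp; linarith
          · simp; linarith
        have key1 : ∀ s : ℝ, 0 ≤ s → f1 (x0 + ((s:ℂ)*ζ) • x) ≤ 0 := by
          intro s hs
          rw [hf1, quad_line hA1 b1 x0 x c1 s ζ hζζ]
          rw [← hf1]
          have h2 : s * (ζ * κ1).re ≤ 0 := mul_nonpos_of_nonneg_of_nonpos hs hζκ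
          have h3 : s^2 * (star x ⬝ᵥ A1 *ᵥ x).re ≤ 0 :=
            mul_nonpos_of_nonneg_of_nonpos (sq_nonneg s) hw
          rw [hκ1] at h2
          linarith
        have key2 : ∀ s : ℝ, 0 ≤ s →
            f2 x0 + 2 * s * (ζ * κ2).re + s^2 * (star x ⬝ᵥ A2 *ᵥ x).re ≤ 0 := by
          intro s hs
          have := himp _ (key1 s hs)
          rw [hf2, quad_line hA2 b2 x0 x c2 s ζ hζζ, ← hf2, ← hκ2] at this
          linarith
        set e2 : ℝ := (ζ * κ2).re with he2
        set F : ℝ := f2 x0 with hF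
        set r : ℝ := (star x ⬝ᵥ A2 *ᵥ x).re with hr
        set s : ℝ := max 1 ((2*|e2| + |F| + 1)/r) with hsdef
        have h1s : (1:ℝ) ≤ s := le_max_left _ _
        have hs0 : (0:ℝ) ≤ s := by linarith
        have hdiv : (2*|e2| + |F| + 1)/r ≤ s := le_max_right _ _
        have hsr : 2*|e2| + |F| + 1 ≤ s*r := (div_le_iff₀ hrr).mp hdiv
        have hineq := key2 s hs0
        nlinarith [mul_le_mul_of_nonneg_left hsr hs0,
          mul_le_mul_of_nonneg_left (neg_abs_le e2) hs0,
          neg_abs_le F, abs_nonneg F, abs_nonneg e2, h1s,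
          mul_nonneg (sub_nonneg.mpr h1s) (abs_nonneg F)]
      · -- τ ≠ 0 : scaling
        have hsc : (Sum.elim x fun _ : Fin 1 => τ)
            = τ • (Sum.elim (τ⁻¹ • x) fun _ : Fin 1 => (1:ℂ)) := by
          funext i
          cases i with
          | inl i =>
            show x i = τ * (τ⁻¹ * x i)
            field_simp
          | inr j =>
            show τ = τ * 1
            ring
        have hττ : star τ * τ = ((Complex.normSq τ : ℝ) : ℂ) := by
          rw [Complex.star_def, mul_comm, Complex.mul_conj]
        set y : Fin N → ℂ := τ⁻¹ • x with hy
        rw [hwx, hsc, sesq_smul, hττ, Complex.re_ofReal_mul] at hw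
        rw [hwx, hsc, sesq_smul, hττ, Complex.re_ofReal_mul]
        have hpos : 0 < Complex.normSq τ := Complex.normSq_pos.mpr hτ0
        have hQ1 : (star (Sum.elim y fun _ : Fin 1 => (1:ℂ)) ⬝ᵥ
            (BMat N A1 b1 c1) *ᵥ (Sum.elim y fun _ : Fin 1 => (1:ℂ))).re ≤ 0 := by
          nlinarith
        rw [BMat_one, ← hf1] at hQ1
        have hQ2 := himp y hQ1
        rw [hf2, ← BMat_one A2 b2 c2 y] at hQ2
        nlinarith
    have hsl : ∃ w0 : Fin N ⊕ Fin 1 → ℂ,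
        (star w0 ⬝ᵥ (BMat N A1 b1 c1) *ᵥ w0).re < 0 := by
      refine ⟨Sum.elim x0 (fun _ : Fin 1 => (1:ℂ)), ?_⟩
      rw [BMat_one, ← hf1]
      exact hx0
    obtain ⟨lam, hlam, hquad⟩ := homog_slemma _ _ hherm1 hherm2 hhom hsl
    refine ⟨lam, hlam, ?_⟩
    have hherm : (lam • BMat N A1 b1 c1 - BMat N A2 b2 c2).IsHermitian :=
      (herm_real_smul hherm1 lam).sub hherm2
    refine Matrix.PosSemidef.of_dotProduct_mulVec_nonneg hherm (fun w => ?_)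
    rw [Complex.le_def]
    have hval : star w ⬝ᵥ ((lam • BMat N A1 b1 c1 - BMat N A2 b2 c2) *ᵥ w)
        = lam • (star w ⬝ᵥ BMat N A1 b1 c1 *ᵥ w) - star w ⬝ᵥ BMat N A2 b2 c2 *ᵥ w := by
      rw [Matrix.sub_mulVec, dotProduct_sub, Matrix.smul_mulVec, dotProduct_smul]
    constructor
    · rw [hval, Complex.sub_re, Complex.real_smul, Complex.re_ofReal_mul, Complex.zero_re]
      exact hquad w
    · rw [Complex.zero_im]
      exact (herm_im hherm w).symm
  · -- reverse direction
    rintro ⟨lam, hlam, hpsd⟩ x hx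
    have h0 := hpsd.dotProduct_mulVec_nonneg (Sum.elim x fun _ : Fin 1 => (1:ℂ))
    rw [Complex.le_def] at h0
    obtain ⟨hre, -⟩ := h0
    have hval : star (Sum.elim x fun _ : Fin 1 => (1:ℂ)) ⬝ᵥ
          ((lam • BMat N A1 b1 c1 - BMat N A2 b2 c2) *ᵥ (Sum.elim x fun _ : Fin 1 => (1:ℂ)))
        = lam • (star (Sum.elim x fun _ : Fin 1 => (1:ℂ)) ⬝ᵥ
              BMat N A1 b1 c1 *ᵥ (Sum.elim x fun _ : Fin 1 => (1:ℂ)))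
          - star (Sum.elim x fun _ : Fin 1 => (1:ℂ)) ⬝ᵥ
              BMat N A2 b2 c2 *ᵥ (Sum.elim x fun _ : Fin 1 => (1:ℂ)) := by
      rw [Matrix.sub_mulVec, dotProduct_sub, Matrix.smul_mulVec, dotProduct_smul]
    rw [hval, Complex.sub_re, Complex.real_smul, Complex.re_ofReal_mul, Complex.zero_re,
      BMat_one, BMat_one, ← hf1, ← hf2] at hre
    nlinarith [mul_nonneg hlam (neg_nonneg.mpr hx)]
end

section
/- Let $P_A$ be uniformly distributed on $[P_{\min}, P_{\max}]$ with $0 \le P_{\min} < P_{\max}$, let $T$ be an independent exponential random variable with mean $\lambda > 0$ (density $\frac{1}{\lambda}e^{-t/\lambda}$ on $[0,\infty)$), and let $t_A > 0$, $\sigma^2 \ge 0$ be constants. Then for every threshold $\Gamma \ge \sigma^2 + P_{\max} t_A$, the miss detection probability satisfies $\Pr(P_A t_A + T + \sigma^2 < \Gamma) = 1 - \frac{\lambda\, e^{-(\Gamma - \sigma^2)/\lambda}}{(P_{\max} - P_{\min}) t_A}\left(e^{P_{\max} t_A / \lambda} - e^{P_{\min} t_A / \lambda}\right)$. -/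
open MeasureTheory

/-- Statistical-WCSI miss detection probability: with `P_A` uniform on
`[Pmin, Pmax]` and `T` an independent exponential with mean `λ`, for any
threshold `Γ ≥ σ² + Pmax t_A`,
`Pr(P_A t_A + T + σ² < Γ) = 1 - (λ e^{-(Γ-σ²)/λ}/((Pmax-Pmin) t_A)) (e^{Pmax t_A/λ} - e^{Pmin t_A/λ})`. -/
theorem stmt_6
    {Ω : Type*} [MeasurableSpace Ω] (ℙ : Measure Ω) [IsProbabilityMeasure ℙ]
    (Pmin Pmax l tA σ2 Γ : ℝ)
    (hPmin : 0 ≤ Pmin) (hPP : Pmin < Pmax) (hl : 0 < l) (htA : 0 < tA) (hσ2 : 0 ≤ σ2)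
    (PA T : Ω → ℝ) (hPAmeas : Measurable PA) (hTmeas : Measurable T)
    (hPAlaw : Measure.map PA ℙ =
      (ENNReal.ofReal (Pmax - Pmin))⁻¹ • volume.restrict (Set.Icc Pmin Pmax))
    (hTlaw : Measure.map T ℙ =
      volume.withDensity
        (fun t => ENNReal.ofReal (if 0 ≤ t then (1 / l) * Real.exp (-t / l) else 0)))
    (hindep : ProbabilityTheory.IndepFun PA T ℙ)
    (hΓ : σ2 + Pmax * tA ≤ Γ) :
    (ℙ {ω | PA ω * tA + T ω + σ2 < Γ}).toReal
      = 1 - (l * Real.exp (-(Γ - σ2) / l)) / ((Pmax - Pmin) * tA)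
          * (Real.exp (Pmax * tA / l) - Real.exp (Pmin * tA / l)) := by
  set c : ℝ := Γ - σ2 with hc
  have hcge : Pmax * tA ≤ c := by simp only [hc]; linarith
  have hk : (0:ℝ) < Pmax - Pmin := by linarith
  have hνprob : IsProbabilityMeasure (Measure.map T ℙ) :=
    Measure.isProbabilityMeasure_map hTmeas.aemeasurable
  -- density identification
  have hdens : (fun t => ENNReal.ofReal (if 0 ≤ t then (1 / l) * Real.exp (-t / l) else 0))
      = ProbabilityTheory.exponentialPDF (1/l) := by
    funext t
    rw [ProbabilityTheory.exponentialPDF_eq]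
    congr 1
    rcases le_or_gt 0 t with h | h
    · rw [if_pos h, if_pos h, show -t/l = -(1/l*t) by ring]
    · rw [if_neg (not_le.2 h), if_neg (not_le.2 h)]
  have hνIio : ∀ s : ℝ, 0 ≤ s →
      Measure.map T ℙ (Set.Iio s) = ENNReal.ofReal (1 - Real.exp (-s / l)) := by
    intro s hs
    have h0 : Measure.map T ℙ {s} = 0 := by
      rw [hTlaw]
      exact (withDensity_absolutelyContinuous _ _) (measure_singleton s)
    have hIio : Set.Iio s = Set.Iic s \ {s} := by
      ext x; simp [lt_iff_le_and_ne]
    rw [hIio, measure_diff_null h0, hTlaw, hdens,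
      withDensity_apply _ measurableSet_Iic,
      ProbabilityTheory.lintegral_exponentialPDF_eq_antiDeriv (by positivity) s, if_pos hs]
    rw [show -(1/l*s) = -s/l by ring]
  -- joint law
  have hmap : Measure.map (fun ω => (PA ω, T ω)) ℙ
      = (Measure.map PA ℙ).prod (Measure.map T ℙ) :=
    (ProbabilityTheory.indepFun_iff_map_prod_eq_prod_map_map
      hPAmeas.aemeasurable hTmeas.aemeasurable).mp hindep
  have hSmeas : MeasurableSet {p : ℝ × ℝ | p.1 * tA + p.2 + σ2 < Γ} :=
    measurableSet_lt (by fun_prop) measurable_const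
  have h1 : ℙ {ω | PA ω * tA + T ω + σ2 < Γ}
      = (Measure.map PA ℙ).prod (Measure.map T ℙ) {p : ℝ × ℝ | p.1 * tA + p.2 + σ2 < Γ} := by
    rw [← hmap, Measure.map_apply (hPAmeas.prodMk hTmeas) hSmeas]
    rfl
  -- Fubini slices
  have h2 : (Measure.map PA ℙ).prod (Measure.map T ℙ) {p : ℝ × ℝ | p.1 * tA + p.2 + σ2 < Γ}
      = ∫⁻ p, Measure.map T ℙ (Set.Iio (c - p * tA)) ∂(Measure.map PA ℙ) := by
    rw [Measure.prod_apply hSmeas]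
    refine lintegral_congr fun p => ?_
    congr 1
    ext t
    simp only [Set.mem_preimage, Set.mem_setOf_eq, Set.mem_Iio, hc]
    constructor <;> intro <;> linarith
  set g : ℝ → ℝ := fun p => 1 - Real.exp ((p * tA - c)/l) with hg
  have hgeq : ∀ p ∈ Set.Icc Pmin Pmax,
      Measure.map T ℙ (Set.Iio (c - p * tA)) = ENNReal.ofReal (g p) := by
    intro p hp
    have hp2 := hp.2
    have hnn : 0 ≤ c - p * tA := by nlinarith
    rw [hνIio _ hnn, show -(c - p * tA)/l = (p * tA - c)/l by ring]
  have hgcont : Continuous g := by fun_prop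
  have hgnn : ∀ p ∈ Set.Icc Pmin Pmax, 0 ≤ g p := by
    intro p hp
    have hp2 := hp.2
    have : (p * tA - c)/l ≤ 0 := by
      apply div_nonpos_of_nonpos_of_nonneg _ hl.le
      nlinarith
    simp only [hg, sub_nonneg]
    calc Real.exp ((p * tA - c)/l) ≤ Real.exp 0 := Real.exp_le_exp.2 this
      _ = 1 := Real.exp_zero
  -- compute the integral over the uniform measure
  have h3 : ∫⁻ p, Measure.map T ℙ (Set.Iio (c - p * tA)) ∂(Measure.map PA ℙ)
      = (ENNReal.ofReal (Pmax - Pmin))⁻¹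
          * ENNReal.ofReal (∫ p in Set.Icc Pmin Pmax, g p) := by
    rw [hPAlaw, lintegral_smul_measure]
    congr 1
    rw [setLIntegral_congr_fun measurableSet_Icc hgeq]
    rw [← ofReal_integral_eq_lintegral_ofReal (hgcont.integrableOn_Icc)
      ((ae_restrict_iff' measurableSet_Icc).2 (ae_of_all _ hgnn))]
  -- interval integral value
  have hFTC : ∫ p in Set.Icc Pmin Pmax, g p
      = (Pmax - Pmin) - (l/tA) * (Real.exp ((Pmax * tA - c)/l) - Real.exp ((Pmin * tA - c)/l)) := by
    rw [MeasureTheory.integral_Icc_eq_integral_Ioc,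
      ← intervalIntegral.integral_of_le hPP.le]
    have hderiv : ∀ x ∈ Set.uIcc Pmin Pmax,
        HasDerivAt (fun p => p - (l/tA) * Real.exp ((p * tA - c)/l)) (g x) x := by
      intro x _
      have h1 : HasDerivAt (fun p : ℝ => (p * tA - c)/l) (tA/l) x := by
        have : HasDerivAt (fun p : ℝ => (p * tA - c)/l) (1 * tA / l) x :=
          (((hasDerivAt_id x).mul_const tA).sub_const c).div_const l
        simpa using this
      have h2 : HasDerivAt (fun p : ℝ => Real.exp ((p * tA - c)/l))
          (Real.exp ((x * tA - c)/l) * (tA/l)) x := h1.exp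
      have h3 : HasDerivAt (fun p => p - (l/tA) * Real.exp ((p * tA - c)/l))
          (1 - l/tA * (Real.exp ((x * tA - c)/l) * (tA/l))) x :=
        (hasDerivAt_id x).sub (h2.const_mul (l/tA))
      convert h3 using 1
      show 1 - Real.exp ((x * tA - c)/l) = _
      field_simp [htA.ne', hl.ne']
    rw [intervalIntegral.integral_eq_sub_of_hasDerivAt hderiv
      (hgcont.intervalIntegrable _ _)]
    ring
  rw [h1, h2, h3, hFTC]
  have hInn : 0 ≤ (Pmax - Pmin) - (l/tA) * (Real.exp ((Pmax * tA - c)/l) - Real.exp ((Pmin * tA - c)/l)) := by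
    rw [← hFTC]
    exact setIntegral_nonneg measurableSet_Icc hgnn
  rw [ENNReal.toReal_mul, ENNReal.toReal_inv, ENNReal.toReal_ofReal hk.le,
    ENNReal.toReal_ofReal hInn]
  have e1 : Real.exp ((Pmax * tA - c)/l) = Real.exp (Pmax * tA / l) * Real.exp (-c/l) := by
    rw [← Real.exp_add]; congr 1; ring
  have e2 : Real.exp ((Pmin * tA - c)/l) = Real.exp (Pmin * tA / l) * Real.exp (-c/l) := by
    rw [← Real.exp_add]; congr 1; ring
  rw [e1, e2]
  field_simp
end

section
/- Let $P_A$ be uniformly distributed on $[P_{\min}, P_{\max}]$ with $0 \le P_{\min} < P_{\max}$, let $T$ be an independent exponential random variable with mean $\lambda > 0$, and let $t_A > 0$, $\sigma^2 \ge 0$. Define the detection error probability $\xi(\Gamma) = \Pr(P_A t_A + \sigma^2 > \Gamma) + \Pr(P_A t_A + T + \sigma^2 < \Gamma)$ for $\Gamma \in \mathbb{R}$. Then $\xi$ attains its minimum over all $\Gamma \in \mathbb{R}$ at $\Gamma^* = \sigma^2 + P_{\max} t_A$, i.e., $\xi(\Gamma^*) \le \xi(\Gamma)$ for all $\Gamma$,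 and the minimum value equals $\xi(\Gamma^*) = 1 - \frac{\lambda}{(P_{\max}-P_{\min}) t_A}\left(1 - e^{-(P_{\max}-P_{\min}) t_A / \lambda}\right)$. -/
open MeasureTheory Set intervalIntegral

noncomputable def Fr (l a : ℝ) : ℝ := if 0 ≤ a then 1 - Real.exp (-a / l) else 0

noncomputable def Phi (l a : ℝ) : ℝ := ∫ v in (0:ℝ)..a, Fr l v

lemma Fr_nonpos {l a : ℝ} (ha : a ≤ 0) : Fr l a = 0 := by
  unfold Fr
  split_ifs with h
  · have : a = 0 := le_antisymm ha h
    simp [this]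
  · rfl

lemma Fr_nonneg {l : ℝ} (hl : 0 < l) (a : ℝ) : 0 ≤ Fr l a := by
  unfold Fr
  split_ifs with h
  · have h2 : -a / l ≤ 0 := div_nonpos_of_nonpos_of_nonneg (by linarith) hl.le
    have := Real.exp_le_one_iff.mpr h2
    linarith
  · exact le_refl 0

lemma Fr_cont {l : ℝ} (hl : 0 < l) : Continuous (Fr l) := by
  unfold Fr
  apply Continuous.if_le (continuous_const.sub ((continuous_neg.div_const l).rexp))
    continuous_const continuous_const continuous_id
  intro a ha
  subst ha
  simp

lemma Fr_intervalIntegrable {l : ℝ} (hl : 0 < l) (a b : ℝ) :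
    IntervalIntegrable (Fr l) volume a b := (Fr_cont hl).intervalIntegrable a b

lemma Phi_nonpos {l a : ℝ} (ha : a ≤ 0) : Phi l a = 0 := by
  unfold Phi
  rw [intervalIntegral.integral_congr (g := fun _ => (0:ℝ))
    (fun v hv => Fr_nonpos (by
      rcases Set.mem_uIcc.mp hv with h | h
      · linarith [h.2]
      · exact h.2))]
  simp

lemma Phi_of_nonneg {l a : ℝ} (hl : 0 < l) (ha : 0 ≤ a) :
    Phi l a = a - l * (1 - Real.exp (-a / l)) := by
  have hl' : l ≠ 0 := hl.ne'
  unfold Phi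
  rw [intervalIntegral.integral_congr (g := fun v => 1 - Real.exp (-v / l))
    (fun v hv => by
      have h0 : 0 ≤ v := by
        rcases Set.mem_uIcc.mp hv with h | h
        · exact h.1
        · linarith [h.1]
      simp [Fr, h0])]
  have key : ∀ x ∈ Set.uIcc (0:ℝ) a, HasDerivAt (fun v => v + l * Real.exp (-v / l))
      (1 - Real.exp (-x / l)) x := by
    intro x _
    have h := (hasDerivAt_id x).add
      (((Real.hasDerivAt_exp (-x / l)).comp x
        ((hasDerivAt_id x).neg.div_const l)).const_mul l)
    refine h.congr_deriv ?_
    field_simp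
    ring
  rw [intervalIntegral.integral_eq_sub_of_hasDerivAt key
    ((continuous_const.sub ((continuous_neg.div_const l).rexp)).intervalIntegrable 0 a)]
  simp [Real.exp_zero]
  ring

lemma integral_Fr {l tA : ℝ} (hl : 0 < l) (htA : 0 < tA) (Pmin Pmax Γ σ2 : ℝ) :
    (∫ p in Pmin..Pmax, Fr l (Γ - σ2 - p * tA))
      = tA⁻¹ * (Phi l (Γ - σ2 - Pmin * tA) - Phi l (Γ - σ2 - Pmax * tA)) := by
  have h1 : (∫ p in Pmin..Pmax, Fr l (Γ - σ2 - p * tA))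
      = tA⁻¹ • ∫ x in Pmin * tA..Pmax * tA, Fr l (Γ - σ2 - x) :=
    intervalIntegral.integral_comp_mul_right (fun x => Fr l (Γ - σ2 - x)) htA.ne'
  have h2 : (∫ x in Pmin * tA..Pmax * tA, Fr l (Γ - σ2 - x))
      = ∫ x in (Γ - σ2) - Pmax * tA..(Γ - σ2) - Pmin * tA, Fr l x :=
    intervalIntegral.integral_comp_sub_left (Fr l) (Γ - σ2)
  have h3 := intervalIntegral.integral_add_adjacent_intervals
    (Fr_intervalIntegrable hl 0 (Γ - σ2 - Pmax * tA))
    (Fr_intervalIntegrable hl (Γ - σ2 - Pmax * tA) (Γ - σ2 - Pmin * tA))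
  rw [h1, h2, smul_eq_mul]
  unfold Phi
  have : (Γ - σ2) - Pmax * tA = Γ - σ2 - Pmax * tA := by ring
  rw [this]
  have : (Γ - σ2) - Pmin * tA = Γ - σ2 - Pmin * tA := by ring
  rw [this]
  rw [← h3]
  ring

lemma nuIio {l : ℝ} (hl : 0 < l) (a : ℝ) :
    (volume.withDensity
      (fun t => ENNReal.ofReal (if 0 ≤ t then (1 / l) * Real.exp (-t / l) else 0)))
      (Set.Iio a) = ENNReal.ofReal (Fr l a) := by
  have hl' : l ≠ 0 := hl.ne'
  have hcont : Continuous (fun t : ℝ => (1 / l) * Real.exp (-t / l)) :=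
    continuous_const.mul ((continuous_neg.div_const l).rexp)
  rw [withDensity_apply _ measurableSet_Iio]
  rcases le_or_gt a 0 with ha | ha
  · rw [Fr_nonpos ha]
    have h0 : (∫⁻ t in Set.Iio a,
        ENNReal.ofReal (if 0 ≤ t then (1 / l) * Real.exp (-t / l) else 0))
        = ∫⁻ t in Set.Iio a, 0 := by
      refine setLIntegral_congr_fun measurableSet_Iio (fun t ht => ?_)
      have h1 : ¬ (0 ≤ t) := by
        simp only [Set.mem_Iio] at ht
        linarith
      simp [h1]
    rw [h0]
    simp
  · have hsplit : Set.Iio a = Set.Iio 0 ∪ Set.Ico 0 a := by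
      ext t
      simp only [Set.mem_Iio, Set.mem_union, Set.mem_Ico]
      constructor
      · intro h
        rcases lt_or_ge t 0 with h' | h'
        · exact Or.inl h'
        · exact Or.inr ⟨h', h⟩
      · rintro (h | h)
        · linarith
        · exact h.2
    rw [hsplit, lintegral_union measurableSet_Ico
      ((Set.Iio_disjoint_Ici le_rfl).mono_right Set.Ico_subset_Ici_self)]
    have h0 : (∫⁻ t in Set.Iio (0:ℝ),
        ENNReal.ofReal (if 0 ≤ t then (1 / l) * Real.exp (-t / l) else 0))
        = ∫⁻ _t in Set.Iio (0:ℝ), (0:ENNReal) := by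
      refine setLIntegral_congr_fun measurableSet_Iio (fun t ht => ?_)
      have h1 : ¬ (0 ≤ t) := by
        simp only [Set.mem_Iio] at ht
        linarith
      simp [h1]
    rw [h0]
    have h1 : (∫⁻ t in Set.Ico 0 a,
        ENNReal.ofReal (if 0 ≤ t then (1 / l) * Real.exp (-t / l) else 0))
        = ∫⁻ t in Set.Ico 0 a, ENNReal.ofReal ((1 / l) * Real.exp (-t / l)) := by
      refine setLIntegral_congr_fun measurableSet_Ico (fun t ht => ?_)
      simp [ht.1]
    rw [h1]
    have hInt : IntegrableOn (fun t : ℝ => (1 / l) * Real.exp (-t / l)) (Set.Ico 0 a) :=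
      (hcont.integrableOn_Icc).mono_set Set.Ico_subset_Icc_self
    have h2 := ofReal_integral_eq_lintegral_ofReal hInt
      (ae_of_all _ fun t => by positivity)
    rw [← h2]
    have h3 : (∫ t in Set.Ico 0 a, (1 / l) * Real.exp (-t / l))
        = ∫ t in (0:ℝ)..a, (1 / l) * Real.exp (-t / l) := by
      rw [intervalIntegral.integral_of_le ha.le, MeasureTheory.integral_Ico_eq_integral_Ioo,
        ← MeasureTheory.integral_Ioc_eq_integral_Ioo]
    have key : ∀ x ∈ Set.uIcc (0:ℝ) a, HasDerivAt (fun v => -Real.exp (-v / l))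
        ((1 / l) * Real.exp (-x / l)) x := by
      intro x _
      have h := (((Real.hasDerivAt_exp (-x / l)).comp x
        ((hasDerivAt_id x).neg.div_const l))).neg
      refine h.congr_deriv ?_
      field_simp
    have h4 : (∫ t in (0:ℝ)..a, (1 / l) * Real.exp (-t / l))
        = (-Real.exp (-a / l)) - (-Real.exp (-(0:ℝ) / l)) :=
      intervalIntegral.integral_eq_sub_of_hasDerivAt key (hcont.intervalIntegrable 0 a)
    rw [h3, h4]
    have hFr : Fr l a = 1 - Real.exp (-a / l) := by simp [Fr, ha.le]
    rw [hFr]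
    simp only [Real.exp_zero, neg_zero, zero_div]
    rw [lintegral_zero, zero_add]
    congr 1
    ring

lemma measA {Ω : Type*} [MeasurableSpace Ω] (ℙ : Measure Ω)
    {Pmin Pmax tA : ℝ} (σ2 : ℝ) (htA : 0 < tA)
    (PA : Ω → ℝ) (hPAmeas : Measurable PA)
    (hPAlaw : Measure.map PA ℙ =
      (ENNReal.ofReal (Pmax - Pmin))⁻¹ • volume.restrict (Set.Icc Pmin Pmax))
    (Γ : ℝ) :
    ℙ {ω | PA ω * tA + σ2 > Γ} =
      (ENNReal.ofReal (Pmax - Pmin))⁻¹ *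
        ENNReal.ofReal (Pmax - max Pmin ((Γ - σ2) / tA)) := by
  have hset : {ω | PA ω * tA + σ2 > Γ} = PA ⁻¹' Set.Ioi ((Γ - σ2) / tA) := by
    ext ω
    simp only [Set.mem_setOf_eq, Set.mem_preimage, Set.mem_Ioi, gt_iff_lt, div_lt_iff₀ htA]
    constructor <;> intro h <;> linarith
  rw [hset, ← Measure.map_apply hPAmeas measurableSet_Ioi, hPAlaw,
    Measure.smul_apply, Measure.restrict_apply measurableSet_Ioi, smul_eq_mul]
  congr 1
  rcases le_or_gt Pmin ((Γ - σ2) / tA) with hc | hc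
  · have heq : Set.Ioi ((Γ - σ2) / tA) ∩ Set.Icc Pmin Pmax
        = Set.Ioc ((Γ - σ2) / tA) Pmax := by
      ext x
      simp only [Set.mem_inter_iff, Set.mem_Ioi, Set.mem_Icc, Set.mem_Ioc]
      constructor
      · rintro ⟨h1, _, h3⟩; exact ⟨h1, h3⟩
      · rintro ⟨h1, h2⟩; exact ⟨h1, le_trans hc h1.le, h2⟩
    rw [heq, Real.volume_Ioc, max_eq_right hc]
  · have heq : Set.Ioi ((Γ - σ2) / tA) ∩ Set.Icc Pmin Pmax = Set.Icc Pmin Pmax := by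
      apply Set.inter_eq_self_of_subset_right
      intro x hx
      exact lt_of_lt_of_le hc hx.1
    rw [heq, Real.volume_Icc, max_eq_left hc.le]

lemma measB {Ω : Type*} [MeasurableSpace Ω] (ℙ : Measure Ω) [IsProbabilityMeasure ℙ]
    {Pmin Pmax l tA : ℝ} (σ2 : ℝ) (hl : 0 < l) (htA : 0 < tA)
    (PA T : Ω → ℝ) (hPAmeas : Measurable PA) (hTmeas : Measurable T)
    (hPAlaw : Measure.map PA ℙ =
      (ENNReal.ofReal (Pmax - Pmin))⁻¹ • volume.restrict (Set.Icc Pmin Pmax))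
    (hTlaw : Measure.map T ℙ =
      volume.withDensity
        (fun t => ENNReal.ofReal (if 0 ≤ t then (1 / l) * Real.exp (-t / l) else 0)))
    (hindep : ProbabilityTheory.IndepFun PA T ℙ) (Γ : ℝ) :
    ℙ {ω | PA ω * tA + T ω + σ2 < Γ} =
      (ENNReal.ofReal (Pmax - Pmin))⁻¹ *
        ENNReal.ofReal (∫ p in Set.Icc Pmin Pmax, Fr l (Γ - σ2 - p * tA)) := by
  have hS : MeasurableSet {q : ℝ × ℝ | q.1 * tA + q.2 + σ2 < Γ} :=
    measurableSet_lt (((measurable_fst.mul_const tA).add measurable_snd).add_const σ2)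
      measurable_const
  have hmap : Measure.map (fun ω => (PA ω, T ω)) ℙ
      = (Measure.map PA ℙ).prod (Measure.map T ℙ) :=
    (ProbabilityTheory.indepFun_iff_map_prod_eq_prod_map_map hPAmeas.aemeasurable
      hTmeas.aemeasurable).mp hindep
  have hpre : {ω | PA ω * tA + T ω + σ2 < Γ}
      = (fun ω => (PA ω, T ω)) ⁻¹' {q : ℝ × ℝ | q.1 * tA + q.2 + σ2 < Γ} := rfl
  haveI : IsProbabilityMeasure (Measure.map T ℙ) :=
    Measure.isProbabilityMeasure_map hTmeas.aemeasurable
  rw [hpre, ← Measure.map_apply (hPAmeas.prodMk hTmeas) hS, hmap, Measure.prod_apply hS]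
  have hfib : ∀ p : ℝ,
      (Measure.map T ℙ) (Prod.mk p ⁻¹' {q : ℝ × ℝ | q.1 * tA + q.2 + σ2 < Γ})
      = ENNReal.ofReal (Fr l (Γ - σ2 - p * tA)) := by
    intro p
    have heq : Prod.mk p ⁻¹' {q : ℝ × ℝ | q.1 * tA + q.2 + σ2 < Γ}
        = Set.Iio (Γ - σ2 - p * tA) := by
      ext t
      simp only [Set.mem_preimage, Set.mem_setOf_eq, Set.mem_Iio]
      constructor <;> intro h <;> linarith
    rw [heq, hTlaw, nuIio hl]
  rw [lintegral_congr hfib, hPAlaw, lintegral_smul_measure]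
  congr 1
  have hInt : IntegrableOn (fun p => Fr l (Γ - σ2 - p * tA)) (Set.Icc Pmin Pmax) :=
    ((Fr_cont hl).comp
      ((continuous_const.sub (continuous_id.mul continuous_const)))).integrableOn_Icc
  exact (ofReal_integral_eq_lintegral_ofReal hInt
    (ae_of_all _ fun p => Fr_nonneg hl _)).symm

/-- Statistical-WCSI optimal detection threshold: the detection error
probability `ξ(Γ) = Pr(P_A t_A + σ² > Γ) + Pr(P_A t_A + T + σ² < Γ)` attains
its minimum over all thresholds at `Γ* = σ² + Pmax t_A`, with minimum value
`1 - (λ/((Pmax-Pmin) t_A)) (1 - e^{-(Pmax-Pmin) t_A/λ})`. -/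
theorem stmt_7
    {Ω : Type*} [MeasurableSpace Ω] (ℙ : Measure Ω) [IsProbabilityMeasure ℙ]
    (Pmin Pmax l tA σ2 : ℝ)
    (hPmin : 0 ≤ Pmin) (hPP : Pmin < Pmax) (hl : 0 < l) (htA : 0 < tA) (hσ2 : 0 ≤ σ2)
    (PA T : Ω → ℝ) (hPAmeas : Measurable PA) (hTmeas : Measurable T)
    (hPAlaw : Measure.map PA ℙ =
      (ENNReal.ofReal (Pmax - Pmin))⁻¹ • volume.restrict (Set.Icc Pmin Pmax))
    (hTlaw : Measure.map T ℙ =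
      volume.withDensity
        (fun t => ENNReal.ofReal (if 0 ≤ t then (1 / l) * Real.exp (-t / l) else 0)))
    (hindep : ProbabilityTheory.IndepFun PA T ℙ)
    (ξ : ℝ → ℝ)
    (hξ : ∀ Γ : ℝ, ξ Γ = (ℙ {ω | PA ω * tA + σ2 > Γ}).toReal
        + (ℙ {ω | PA ω * tA + T ω + σ2 < Γ}).toReal) :
    (∀ Γ : ℝ, ξ (σ2 + Pmax * tA) ≤ ξ Γ) ∧
    ξ (σ2 + Pmax * tA)
      = 1 - l / ((Pmax - Pmin) * tA) * (1 - Real.exp (-(Pmax - Pmin) * tA / l)) := by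
  have hΔ : (0:ℝ) < Pmax - Pmin := by linarith
  have hΔt : (0:ℝ) < (Pmax - Pmin) * tA := by positivity
  -- master formula for ξ
  have hxi : ∀ Γ : ℝ, ξ Γ =
      (tA * max (Pmax - max Pmin ((Γ - σ2) / tA)) 0
        + (Phi l (Γ - σ2 - Pmin * tA) - Phi l (Γ - σ2 - Pmax * tA)))
      / ((Pmax - Pmin) * tA) := by
    intro Γ
    rw [hξ Γ, measA ℙ σ2 htA PA hPAmeas hPAlaw Γ,
      measB ℙ σ2 hl htA PA T hPAmeas hTmeas hPAlaw hTlaw hindep Γ]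
    have hJ : (∫ p in Set.Icc Pmin Pmax, Fr l (Γ - σ2 - p * tA))
        = tA⁻¹ * (Phi l (Γ - σ2 - Pmin * tA) - Phi l (Γ - σ2 - Pmax * tA)) := by
      rw [MeasureTheory.integral_Icc_eq_integral_Ioc,
        ← intervalIntegral.integral_of_le hPP.le, integral_Fr hl htA]
    have hJ0 : 0 ≤ ∫ p in Set.Icc Pmin Pmax, Fr l (Γ - σ2 - p * tA) :=
      setIntegral_nonneg measurableSet_Icc (fun p _ => Fr_nonneg hl _)
    rw [ENNReal.toReal_mul, ENNReal.toReal_mul, ENNReal.toReal_inv,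
      ENNReal.toReal_ofReal hΔ.le, ENNReal.toReal_ofReal', ENNReal.toReal_ofReal hJ0, hJ]
    field_simp
  -- value at the optimal threshold
  have hstar : ξ (σ2 + Pmax * tA)
      = 1 - l / ((Pmax - Pmin) * tA) * (1 - Real.exp (-(Pmax - Pmin) * tA / l)) := by
    rw [hxi]
    have hc : (σ2 + Pmax * tA - σ2) / tA = Pmax := by field_simp; ring
    have h1 : σ2 + Pmax * tA - σ2 - Pmax * tA = 0 := by ring
    have h2 : σ2 + Pmax * tA - σ2 - Pmin * tA = (Pmax - Pmin) * tA := by ring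
    rw [hc, h1, h2, max_eq_right hPP.le, sub_self, max_self, mul_zero, zero_add,
      Phi_nonpos le_rfl, Phi_of_nonneg hl hΔt.le, sub_zero]
    have harg : -((Pmax - Pmin) * tA) / l = -(Pmax - Pmin) * tA / l := by ring
    rw [harg]
    field_simp
  refine ⟨?_, hstar⟩
  intro Γ
  rw [hstar, hxi Γ]
  have hrw : (1 : ℝ) - l / ((Pmax - Pmin) * tA)
        * (1 - Real.exp (-(Pmax - Pmin) * tA / l))
      = ((Pmax - Pmin) * tA - l * (1 - Real.exp (-(Pmax - Pmin) * tA / l)))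
        / ((Pmax - Pmin) * tA) := by
    field_simp
  have hED : Real.exp (-(Pmax - Pmin) * tA / l) ≤ 1 :=
    Real.exp_le_one_iff.mpr (by
      apply div_nonpos_of_nonpos_of_nonneg _ hl.le
      nlinarith)
  rcases le_or_gt ((Γ - σ2) / tA) Pmin with hc1 | hc1
  · -- Γ below the support: first term is full
    have hPle : Pmin * tA ≤ Pmax * tA := by nlinarith
    have hle : Γ - σ2 ≤ Pmin * tA := (div_le_iff₀ htA).mp hc1
    have ham : Γ - σ2 - Pmax * tA ≤ 0 := by linarith
    have haM : Γ - σ2 - Pmin * tA ≤ 0 := by linarith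
    rw [max_eq_left hc1, Phi_nonpos ham, Phi_nonpos haM, max_eq_left hΔ.le, hrw,
      div_le_div_iff₀ hΔt hΔt]
    nlinarith [mul_nonneg (mul_nonneg hl.le
      (by linarith : (0:ℝ) ≤ 1 - Real.exp (-(Pmax - Pmin) * tA / l))) hΔt.le]
  · rcases le_or_gt Pmax ((Γ - σ2) / tA) with hc2 | hc2
    · -- Γ above the support
      have hge : Pmax * tA ≤ Γ - σ2 := (le_div_iff₀ htA).mp hc2
      have ham : 0 ≤ Γ - σ2 - Pmax * tA := by linarith
      have haM : 0 ≤ Γ - σ2 - Pmin * tA := by nlinarith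
      have hmax0 : max (Pmax - max Pmin ((Γ - σ2) / tA)) 0 = 0 :=
        max_eq_right (by
          rw [max_eq_right (le_trans hPP.le hc2)]
          linarith)
      rw [hmax0, mul_zero, zero_add, Phi_of_nonneg hl ham, Phi_of_nonneg hl haM, hrw,
        div_le_div_iff₀ hΔt hΔt]
      have hexp : Real.exp (-(Γ - σ2 - Pmin * tA) / l)
          = Real.exp (-(Γ - σ2 - Pmax * tA) / l) * Real.exp (-(Pmax - Pmin) * tA / l) := by
        rw [← Real.exp_add]
        congr 1
        field_simp
        ring
      have h1 : Real.exp (-(Γ - σ2 - Pmax * tA) / l) ≤ 1 :=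
        Real.exp_le_one_iff.mpr (div_nonpos_of_nonpos_of_nonneg (by linarith) hl.le)
      have key : (Pmax - Pmin) * tA - l * (1 - Real.exp (-(Pmax - Pmin) * tA / l))
          ≤ (Γ - σ2 - Pmin * tA - l * (1 - Real.exp (-(Γ - σ2 - Pmin * tA) / l))
            - (Γ - σ2 - Pmax * tA - l * (1 - Real.exp (-(Γ - σ2 - Pmax * tA) / l)))) := by
        rw [hexp]
        nlinarith [mul_le_mul_of_nonneg_right h1 (by linarith : (0:ℝ) ≤ 1 - Real.exp (-(Pmax - Pmin) * tA / l)), hl.le]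
      nlinarith [key, hΔt]
    · -- Γ inside the support
      have hlt : Γ - σ2 < Pmax * tA := (div_lt_iff₀ htA).mp hc2
      have hgt : Pmin * tA < Γ - σ2 := (lt_div_iff₀ htA).mp hc1
      have ham : Γ - σ2 - Pmax * tA ≤ 0 := by linarith
      have haM : 0 ≤ Γ - σ2 - Pmin * tA := by linarith
      have hPc : (0:ℝ) ≤ Pmax - (Γ - σ2) / tA := by linarith
      rw [max_eq_right hc1.le, max_eq_left hPc, Phi_nonpos ham, Phi_of_nonneg hl haM,
        sub_zero]
      have hrw2 : tA * (Pmax - (Γ - σ2) / tA) = Pmax * tA - (Γ - σ2) := by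
        field_simp
      rw [hrw2, hrw, div_le_div_iff₀ hΔt hΔt]
      have hE : Real.exp (-(Pmax - Pmin) * tA / l)
          ≤ Real.exp (-(Γ - σ2 - Pmin * tA) / l) :=
        Real.exp_le_exp.mpr ((div_le_div_iff_of_pos_right hl).mpr (by linarith))
      nlinarith [mul_le_mul_of_nonneg_right
        (mul_le_mul_of_nonneg_left hE hl.le) hΔt.le]
end

section
/- Let $\lambda_w > 0$, $\lambda_A > 0$ and $P_{\max} > P_{\min} > 0$ be real numbers, and set $\pi = P_{\max}/P_{\min}$ and $\tau = P_{\max}\lambda_A/\lambda_w$. Then $\int_0^{\infty} \left[ 1 + \frac{\lambda_w\left(e^{-P_{\max} t/\lambda_w} - 1\right)}{(P_{\max}-P_{\min})\,t} + \frac{P_{\min}}{P_{\max}-P_{\min}}\, e^{-P_{\max} t/\lambda_w} \right] \frac{1}{\lambda_A} e^{-t/\lambda_A}\, dt = 1 - \frac{\pi}{\pi - 1}\cdot\frac{\ln(\tau+1)}{\tau} + \frac{1}{\pi - 1}\cdot\frac{1}{\tau + 1}$. -/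
open MeasureTheory Real Set

lemma int_exp_neg_mul {s : ℝ} (hs : 0 < s) :
    ∫ t in Set.Ioi (0:ℝ), Real.exp (-(s*t)) = 1/s := by
  have h := integral_comp_mul_left_Ioi (fun x => Real.exp (-x)) 0 hs
  simp only [mul_zero] at h
  simpa [integral_exp_neg_Ioi, integral_exp_Iic_zero, smul_eq_mul, one_div] using h

section Frullani

lemma frullani_prod_integrable {a b : ℝ} (ha : 0 < a) :
    Integrable (fun p : ℝ × ℝ => Real.exp (-(p.1 * p.2)))
      ((volume.restrict (Icc a b)).prod (volume.restrict (Ioi 0))) := by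
  have hmeas : AEStronglyMeasurable (fun p : ℝ × ℝ => Real.exp (-(p.1 * p.2)))
      ((volume.restrict (Icc a b)).prod (volume.restrict (Ioi 0))) := by
    exact (Real.continuous_exp.comp (continuous_fst.mul continuous_snd).neg).aestronglyMeasurable
  rw [integrable_prod_iff hmeas]
  constructor
  · filter_upwards [ae_restrict_mem measurableSet_Icc] with s hs
    have hI : IntegrableOn (fun t => Real.exp (-s * t)) (Ioi 0) :=
      exp_neg_integrableOn_Ioi 0 (lt_of_lt_of_le ha hs.1)
    simpa [neg_mul, IntegrableOn] using hI
  · have h1 : Integrable (fun s : ℝ => 1/s) (volume.restrict (Icc a b)) := by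
      apply ContinuousOn.integrableOn_compact isCompact_Icc
      apply ContinuousOn.div continuousOn_const continuousOn_id
      intro s hs; exact (lt_of_lt_of_le ha hs.1).ne'
    apply h1.congr
    filter_upwards [ae_restrict_mem measurableSet_Icc] with s hs
    have hspos : 0 < s := lt_of_lt_of_le ha hs.1
    rw [show (fun t => ‖Real.exp (-(s * t))‖) = fun t => Real.exp (-(s * t)) by
      ext t; exact norm_of_nonneg (Real.exp_nonneg _) |>.symm ▸ rfl]
    · exact (int_exp_neg_mul hspos).symm

lemma frullani_inner {a b : ℝ} (hab : a ≤ b) (t : ℝ) (ht : 0 < t) :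
    ∫ s in Icc a b, Real.exp (-(s*t)) = (Real.exp (-(a*t)) - Real.exp (-(b*t)))/t := by
  rw [integral_Icc_eq_integral_Ioc, ← intervalIntegral.integral_of_le hab]
  have hc : (-t) ≠ 0 := neg_ne_zero.mpr ht.ne'
  have h := intervalIntegral.integral_comp_mul_right (a := a) (b := b)
      (fun x => Real.exp x) hc
  simp only [mul_neg] at h
  have : (∫ s in a..b, Real.exp (-(s * t))) = (-t)⁻¹ • ∫ x in (a*(-t))..(b*(-t)), Real.exp x := by
    simpa [mul_neg] using h
  rw [this, integral_exp]
  rw [smul_eq_mul]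
  field_simp
  ring

lemma frullani_integrable {a b : ℝ} (ha : 0 < a) (hab : a ≤ b) :
    IntegrableOn (fun t => (Real.exp (-(a*t)) - Real.exp (-(b*t)))/t) (Set.Ioi 0) := by
  have h := (frullani_prod_integrable (b := b) ha).integral_prod_right
  apply h.congr
  filter_upwards [ae_restrict_mem measurableSet_Ioi] with t ht
  exact frullani_inner hab t ht

lemma frullani {a b : ℝ} (ha : 0 < a) (hab : a ≤ b) :
    ∫ t in Set.Ioi (0:ℝ), (Real.exp (-(a*t)) - Real.exp (-(b*t)))/t = Real.log (b/a) := by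
  have hswap := integral_integral_swap
    (f := fun s t => Real.exp (-(s*t)))
    (μ := volume.restrict (Icc a b)) (ν := volume.restrict (Ioi 0))
    (frullani_prod_integrable (b := b) ha)
  calc ∫ t in Set.Ioi (0:ℝ), (Real.exp (-(a*t)) - Real.exp (-(b*t)))/t
      = ∫ t in Set.Ioi (0:ℝ), ∫ s in Icc a b, Real.exp (-(s*t)) := by
        refine setIntegral_congr_fun measurableSet_Ioi fun t ht => ?_
        exact (frullani_inner hab t ht).symm
    _ = ∫ s in Icc a b, ∫ t in Set.Ioi (0:ℝ), Real.exp (-(s*t)) := hswap.symm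
    _ = ∫ s in Icc a b, 1/s := by
        refine setIntegral_congr_fun measurableSet_Icc fun s hs => ?_
        exact int_exp_neg_mul (lt_of_lt_of_le ha hs.1)
    _ = Real.log (b/a) := by
        rw [integral_Icc_eq_integral_Ioc, ← intervalIntegral.integral_of_le hab,
          integral_one_div]
        intro h
        have := h  -- 0 ∈ uIcc a b
        rw [Set.uIcc_of_le hab] at this
        exact absurd this.1 (not_le.mpr ha)

end Frullani



/-- Closed form of the average minimum detection error probability (paper
eq. (39)-(41)): averaging the conditional minimum DEP against the exponential
density of the channel gain gives `1 - (π/(π-1))·ln(τ+1)/τ + (1/(π-1))·1/(τ+1)`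
with `π = Pmax/Pmin` and `τ = Pmax λ_A / λ_w`. -/
theorem stmt_8
    (lw lA Pmin Pmax : ℝ) (hlw : 0 < lw) (hlA : 0 < lA)
    (hPmin : 0 < Pmin) (hPP : Pmin < Pmax)
    (pi tau : ℝ) (hpi : pi = Pmax / Pmin) (htau : tau = Pmax * lA / lw) :
    ∫ t in Set.Ioi (0 : ℝ),
        (1 + lw * (Real.exp (-(Pmax * t) / lw) - 1) / ((Pmax - Pmin) * t)
            + Pmin / (Pmax - Pmin) * Real.exp (-(Pmax * t) / lw))
          * ((1 / lA) * Real.exp (-t / lA))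
      = 1 - pi / (pi - 1) * (Real.log (tau + 1) / tau)
          + 1 / (pi - 1) * (1 / (tau + 1)) := by
  have hΔ : 0 < Pmax - Pmin := sub_pos.mpr hPP
  set a : ℝ := Pmax / lw with ha_def
  set bb : ℝ := 1 / lA with hbb_def
  have ha : 0 < a := div_pos (hPmin.trans hPP) hlw
  have hbb : 0 < bb := by positivity
  set C : ℝ := lw / ((Pmax - Pmin) * lA) with hC_def
  have hcongr : ∀ t ∈ Set.Ioi (0:ℝ),
      (1 + lw * (Real.exp (-(Pmax * t) / lw) - 1) / ((Pmax - Pmin) * t)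
            + Pmin / (Pmax - Pmin) * Real.exp (-(Pmax * t) / lw))
          * ((1 / lA) * Real.exp (-t / lA))
      = (1/lA) * Real.exp (-(bb*t))
          - C * ((Real.exp (-(bb*t)) - Real.exp (-((a+bb)*t)))/t)
          + (Pmin/((Pmax-Pmin)*lA)) * Real.exp (-((a+bb)*t)) := by
    intro t ht
    have ht' : (0:ℝ) < t := ht
    have e1 : Real.exp (-(Pmax * t) / lw) = Real.exp (-(a*t)) := by
      congr 1; rw [ha_def]; field_simp
    have e2 : Real.exp (-t / lA) = Real.exp (-(bb*t)) := by
      congr 1; rw [hbb_def]; field_simp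
    have e3 : Real.exp (-((a+bb)*t)) = Real.exp (-(a*t)) * Real.exp (-(bb*t)) := by
      rw [← Real.exp_add]; congr 1; ring
    rw [e1, e2, e3, hC_def]
    field_simp
    ring
  rw [MeasureTheory.setIntegral_congr_fun measurableSet_Ioi hcongr]
  have hI1 : MeasureTheory.IntegrableOn (fun t => (1/lA) * Real.exp (-(bb*t))) (Set.Ioi 0) := by
    have := (exp_neg_integrableOn_Ioi 0 hbb).const_mul (1/lA)
    simpa [neg_mul, IntegrableOn] using this
  have hI2 : MeasureTheory.IntegrableOn
      (fun t => (Real.exp (-(bb*t)) - Real.exp (-((a+bb)*t)))/t) (Set.Ioi 0) :=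
    frullani_integrable hbb (by linarith)
  have hI3 : MeasureTheory.IntegrableOn
      (fun t => (Pmin/((Pmax-Pmin)*lA)) * Real.exp (-((a+bb)*t))) (Set.Ioi 0) := by
    have := (exp_neg_integrableOn_Ioi 0 (by linarith : (0:ℝ) < a + bb)).const_mul
      (Pmin/((Pmax-Pmin)*lA))
    simpa only [neg_mul, IntegrableOn] using this
  rw [MeasureTheory.integral_add (by exact (hI1.sub (hI2.const_mul C))) hI3,
    MeasureTheory.integral_sub hI1 (hI2.const_mul C),
    MeasureTheory.integral_const_mul, MeasureTheory.integral_const_mul,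
    MeasureTheory.integral_const_mul,
    int_exp_neg_mul hbb, int_exp_neg_mul (by linarith : (0:ℝ) < a + bb),
    frullani hbb (by linarith)]
  have hlogarg : (a+bb)/bb = tau + 1 := by
    rw [htau, ha_def, hbb_def]; field_simp
  rw [hlogarg]
  have hPmax : (0:ℝ) < Pmax := hPmin.trans hPP
  have hden : (0:ℝ) < Pmax*lA + lw := by positivity
  have h1 : (1:ℝ)/lA * (1/bb) = 1 := by rw [hbb_def]; field_simp
  have h2 : C = pi/(pi-1) * (1/tau) := by
    rw [hpi, htau, hC_def, div_sub_one hPmin.ne']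
    rw [div_div_div_cancel_right₀]
    · field_simp
    · exact hPmin.ne'
  have h3 : Pmin/((Pmax-Pmin)*lA) * (1/(a+bb)) = 1/(pi-1) * (1/(tau+1)) := by
    rw [hpi, htau, ha_def, hbb_def]
    have e : Pmax/lw + 1/lA = (Pmax*lA+lw)/(lw*lA) := by
      rw [div_add_div _ _ hlw.ne' hlA.ne', mul_one]
    have e2 : Pmax*lA/lw + 1 = (Pmax*lA+lw)/lw := by
      rw [div_add_one hlw.ne']
    rw [e, e2, one_div_div, one_div_div, div_sub_one hPmin.ne', one_div_div]
    rw [div_mul_div_comm, div_mul_div_comm,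
      div_eq_div_iff (mul_ne_zero (mul_ne_zero hΔ.ne' hlA.ne') hden.ne')
        (mul_ne_zero hΔ.ne' hden.ne')]
    ring
  rw [h1, h2, h3]
  ring
end

section
/- For every real number $\tau > 0$ and every real number $\pi \ge 2$, the strict inequality $\tau + \left(1 + \frac{1}{\pi}\right)\tau^2 < (1+\tau)^2 \ln(1+\tau)$ holds. -/
private lemma log_gt (t : ℝ) (ht : 0 < t) : t / (1 + t) < Real.log (1 + t) := by
  have h1 : (0:ℝ) < 1 + t := by linarith
  have h2 : Real.log (1/(1+t)) < 1/(1+t) - 1 := by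
    apply Real.log_lt_sub_one_of_pos (by positivity)
    intro h
    have : (1:ℝ) + t = 1 := by
      field_simp at h; linarith
    linarith
  rw [Real.log_div one_ne_zero (by linarith), Real.log_one] at h2
  have : t / (1 + t) = 1 - 1/(1+t) := by field_simp; ring
  linarith

private lemma key (tau : ℝ) (htau : 0 < tau) :
    tau + (3/2) * tau ^ 2 < (1 + tau) ^ 2 * Real.log (1 + tau) := by
  set f : ℝ → ℝ := fun t => (1 + t) ^ 2 * Real.log (1 + t) - t - 3/2 * t ^ 2 with hf
  have hmono : StrictMonoOn f (Set.Ici 0) := by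
    have hderiv : ∀ t : ℝ, 0 ≤ t →
        HasDerivAt f (2 * (1 + t) * Real.log (1 + t) - 2 * t) t := by
      intro t ht
      have h1 : (0:ℝ) < 1 + t := by linarith
      have hlog : HasDerivAt (fun x : ℝ => Real.log (1 + x)) (1/(1+t)) t := by
        have := (Real.hasDerivAt_log (ne_of_gt h1)).comp t
          ((hasDerivAt_id t).const_add 1)
        exact this.congr_deriv (by simp [one_div])
      have hsq : HasDerivAt (fun x : ℝ => (1 + x) ^ 2) (2 * (1 + t)) t := by
        have := ((hasDerivAt_id t).const_add 1).pow 2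
        exact this.congr_deriv (by simp)
      have hmul := hsq.mul hlog
      have h := ((hmul.sub (hasDerivAt_id t)).sub
        (((hasDerivAt_id t).pow 2).const_mul (3/2)))
      refine h.congr_deriv ?_
      simp only [id]
      field_simp
      ring
    apply StrictMonoOn.mono (s := Set.Ici (0:ℝ))
    · apply strictMonoOn_of_deriv_pos (convex_Ici 0)
      · exact ContinuousOn.congr (by fun_prop (disch := intro x hx; simp at hx; positivity))
          (fun x hx => rfl)
      · intro x hx
        simp only [interior_Ici, Set.mem_Ioi] at hx
        rw [(hderiv x hx.le).deriv]
        have := log_gt x hx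
        have h1 : (0:ℝ) < 1 + x := by linarith
        have : x < (1 + x) * Real.log (1 + x) := by
          calc x = (1 + x) * (x / (1 + x)) := by field_simp
          _ < (1 + x) * Real.log (1 + x) := by
            exact mul_lt_mul_of_pos_left this h1
        linarith
    · exact le_refl _
  have h0 : f 0 < f tau := hmono (Set.self_mem_Ici) (Set.mem_Ici.mpr htau.le) htau
  simp only [hf] at h0
  norm_num at h0
  linarith

/-- The key inequality behind the positivity of the derivative of the average
minimum detection error probability (paper eq. (42)): for `τ > 0` and
`π ≥ 2`, one has `τ + (1 + 1/π)τ² < (1+τ)² ln(1+τ)`. -/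
theorem stmt_10 (pi tau : ℝ) (hpi : 2 ≤ pi) (htau : 0 < tau) :
    tau + (1 + 1 / pi) * tau ^ 2 < (1 + tau) ^ 2 * Real.log (1 + tau) := by
  have h1 : 1 / pi ≤ 1 / 2 := by
    apply div_le_div_of_nonneg_left (by norm_num) (by linarith) hpi
  have h2 : (1 + 1 / pi) * tau ^ 2 ≤ (3/2) * tau ^ 2 := by
    apply mul_le_mul_of_nonneg_right (by linarith) (by positivity)
  have := key tau htau
  linarith
end

section
/- Let $\pi \ge 2$ be a real number and define $\bar{\xi}^*(\tau) = 1 - \left(\frac{\pi}{\pi-1}\cdot\frac{\ln(\tau+1)}{\tau} - \frac{1}{\pi-1}\cdot\frac{1}{\tau+1}\right)$ for $\tau > 0$. Then $\bar{\xi}^*$ is strictly increasing on $(0, \infty)$. -/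
/-- `x < (x+1) log(x+1)` for `x > 0`. -/
lemma log_ineq_aux (x : ℝ) (hx : 0 < x) : x < (x + 1) * Real.log (x + 1) := by
  have hx1 : (0:ℝ) < x + 1 := by linarith
  have h1 : Real.log (x + 1)⁻¹ < (x + 1)⁻¹ - 1 := by
    apply Real.log_lt_sub_one_of_pos (by positivity)
    intro h
    have : x + 1 = 1 := by
      field_simp at h
      linarith [h]
    linarith
  rw [Real.log_inv] at h1
  have h3 : (x + 1) * (-Real.log (x + 1)) < (x + 1) * ((x + 1)⁻¹ - 1) :=
    mul_lt_mul_of_pos_left h1 hx1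
  have h2 : (x + 1) * ((x + 1)⁻¹ - 1) = -x := by field_simp; ring
  rw [h2] at h3
  nlinarith [h3]

/-- `2 (x+1)^2 log(x+1) > 2 x (x+1) + x^2` for `x > 0`. -/
lemma log_ineq_aux2 (x : ℝ) (hx : 0 < x) :
    0 < 2 * (x + 1) ^ 2 * Real.log (x + 1) - (2 * x * (x + 1) + x ^ 2) := by
  set H : ℝ → ℝ := fun y => 2 * (y + 1) ^ 2 * Real.log (y + 1) - (2 * y * (y + 1) + y ^ 2)
    with hH
  have hder : ∀ y : ℝ, -1 < y →
      HasDerivAt H (4 * (y + 1) * Real.log (y + 1) - 4 * y) y := by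
    intro y hy
    have hy1 : y + 1 ≠ 0 := by linarith
    have hL : HasDerivAt (fun t : ℝ => Real.log (t + 1)) (1 / (y + 1)) y := by
      have := (Real.hasDerivAt_log hy1).comp y ((hasDerivAt_id y).add_const 1)
      simpa [one_div, Function.comp_def] using this
    have hP : HasDerivAt (fun t : ℝ => (t + 1) ^ 2) (2 * (y + 1) ^ 1 * 1) y :=
      ((hasDerivAt_id y).add_const 1).pow 2
    have hQ : HasDerivAt (fun t : ℝ => 2 * t * (t + 1) + t ^ 2)
        (2 * (y + 1) + 2 * y + 2 * y ^ 1) y := by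
      have ha : HasDerivAt (fun t : ℝ => 2 * t) 2 y := by
        simpa using (hasDerivAt_id y).const_mul 2
      have hb : HasDerivAt (fun t : ℝ => t + 1) 1 y := (hasDerivAt_id y).add_const 1
      have hc : HasDerivAt (fun t : ℝ => t ^ 2) (2 * y ^ 1) y := by
        simpa using hasDerivAt_pow 2 y
      have := (ha.mul hb).add hc
      exact this.congr_deriv (by ring)
    have hmain := (((hP.mul hL).const_mul 2).sub hQ)
    have hyy : (y + 1) ^ 2 * (1 / (y + 1)) = y + 1 := by
      rw [sq, mul_assoc, mul_one_div_cancel hy1, mul_one]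
    have h2 := hmain.congr_deriv (by rw [hyy]; ring : _ = 4 * (y + 1) * Real.log (y + 1) - 4 * y)
    refine h2.congr_of_eventuallyEq (Filter.Eventually.of_forall fun z => ?_)
    simp [hH]; ring
  have hmono : StrictMonoOn H (Set.Ici 0) := by
    apply strictMonoOn_of_deriv_pos (convex_Ici 0)
    · intro y hy
      exact (hder y (by simp at hy; linarith)).continuousAt.continuousWithinAt
    · intro y hy
      rw [interior_Ici] at hy
      simp only [Set.mem_Ioi] at hy
      rw [(hder y (by linarith)).deriv]
      have := log_ineq_aux y hy
      linarith
  have h0 : H 0 = 0 := by simp [hH]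
  have := hmono (Set.self_mem_Ici) (Set.mem_Ici.mpr hx.le) hx
  rw [h0] at this
  simpa [hH] using this

/-- The average minimum detection error probability
`ξ̄*(τ) = 1 - (π/(π-1)·ln(τ+1)/τ - 1/(π-1)·1/(τ+1))` is strictly increasing
on `(0, ∞)` when `π ≥ 2`. -/
theorem stmt_11 (pi : ℝ) (hpi : 2 ≤ pi) :
    StrictMonoOn
      (fun tau : ℝ =>
        1 - (pi / (pi - 1) * (Real.log (tau + 1) / tau)
              - 1 / (pi - 1) * (1 / (tau + 1))))
      (Set.Ioi 0) := by
  have hc : (0:ℝ) < pi - 1 := by linarith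
  have hder : ∀ t : ℝ, 0 < t →
      HasDerivAt (fun tau : ℝ =>
        1 - (pi / (pi - 1) * (Real.log (tau + 1) / tau)
              - 1 / (pi - 1) * (1 / (tau + 1))))
        (-(pi / (pi - 1) * ((1 / (t + 1) * t - Real.log (t + 1) * 1) / t ^ 2)
            - 1 / (pi - 1) * ((0 * (t + 1) - 1 * 1) / (t + 1) ^ 2))) t := by
    intro t ht
    have ht1 : t + 1 ≠ 0 := by linarith
    have hL : HasDerivAt (fun s : ℝ => Real.log (s + 1)) (1 / (t + 1)) t := by
      have := (Real.hasDerivAt_log ht1).comp t ((hasDerivAt_id t).add_const 1)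
      simpa [one_div, Function.comp_def] using this
    have hq : HasDerivAt (fun s : ℝ => Real.log (s + 1) / s)
        ((1 / (t + 1) * t - Real.log (t + 1) * 1) / t ^ 2) t :=
      hL.div (hasDerivAt_id t) ht.ne'
    have hr : HasDerivAt (fun s : ℝ => 1 / (s + 1))
        ((0 * (t + 1) - 1 * 1) / (t + 1) ^ 2) t :=
      (hasDerivAt_const t 1).div ((hasDerivAt_id t).add_const 1) ht1
    exact ((hq.const_mul (pi / (pi - 1))).sub (hr.const_mul (1 / (pi - 1)))).const_sub 1
  apply strictMonoOn_of_deriv_pos (convex_Ioi 0)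
  · intro t ht
    exact (hder t ht).continuousAt.continuousWithinAt
  · intro t ht
    rw [interior_Ioi] at ht
    simp only [Set.mem_Ioi] at ht
    rw [(hder t ht).deriv]
    have ht1 : (0:ℝ) < t + 1 := by linarith
    set L := Real.log (t + 1) with hLdef
    have key : (-(pi / (pi - 1) * ((1 / (t + 1) * t - L * 1) / t ^ 2)
            - 1 / (pi - 1) * ((0 * (t + 1) - 1 * 1) / (t + 1) ^ 2)))
        = (pi * ((t + 1) * L - t) * (t + 1) - t ^ 2)
            / ((pi - 1) * (t ^ 2 * (t + 1) ^ 2)) := by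
      field_simp
      ring
    rw [key]
    apply div_pos _ (by positivity)
    have h1 : t < (t + 1) * L := log_ineq_aux t ht
    have h2 : 0 < 2 * (t + 1) ^ 2 * L - (2 * t * (t + 1) + t ^ 2) := log_ineq_aux2 t ht
    have hfac : 0 ≤ ((t + 1) * L - t) * (t + 1) :=
      mul_nonneg (by linarith) (by linarith)
    have hkey : 2 * (((t + 1) * L - t) * (t + 1)) ≤ pi * (((t + 1) * L - t) * (t + 1)) :=
      mul_le_mul_of_nonneg_right hpi hfac
    nlinarith [hkey, h2]
end

section
/- Let $\pi \ge 2$ be a real number, define $f(\tau) = \frac{\pi}{\pi-1}\cdot\frac{\ln(\tau+1)}{\tau} - \frac{1}{\pi-1}\cdot\frac{1}{\tau+1}$ for $\tau > 0$, and let $\epsilon \in (0,1)$. Then there exists a unique $\tau_\epsilon > 0$ with $f(\tau_\epsilon) = \epsilon$, and for every $\tau > 0$ one has $f(\tau) \le \epsilon$ if and only if $\tau \ge \tau_\epsilon$. -/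
open Real Set Filter

private lemma log_gt_aux (x : ℝ) (hx : 0 < x) : x / (1 + x) < Real.log (1 + x) := by
  have h1 : (0:ℝ) < 1 + x := by linarith
  have h2 : Real.log (1 / (1 + x)) < 1 / (1 + x) - 1 := by
    apply Real.log_lt_sub_one_of_pos (by positivity)
    intro h
    rw [div_eq_one_iff_eq (by linarith)] at h
    linarith
  rw [Real.log_div one_ne_zero (by linarith), Real.log_one] at h2
  have h3 : 1 / (1 + x) - 1 = -(x / (1 + x)) := by field_simp; ring
  linarith [h2, h3.symm ▸ h2]

private lemma hasDerivAt_log1p (x : ℝ) (hx : (0:ℝ) < 1 + x) :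
    HasDerivAt (fun y : ℝ => Real.log (1 + y)) (1 / (1 + x)) x := by
  have h := (Real.hasDerivAt_log hx.ne').comp x ((hasDerivAt_id x).const_add 1)
  simpa [one_div, Function.comp_def] using h

private lemma key_ineq (x : ℝ) (hx : 0 < x) :
    2 * x + 3 * x ^ 2 < 2 * (1 + x) ^ 2 * Real.log (1 + x) := by
  set h : ℝ → ℝ := fun y => 2 * (1 + y) ^ 2 * Real.log (1 + y) - 2 * y - 3 * y ^ 2 with hh
  have hderiv : ∀ y : ℝ, 0 < 1 + y →
      HasDerivAt h (4 * (1 + y) * Real.log (1 + y) - 4 * y) y := by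
    intro y hy
    have h1 : HasDerivAt (fun z : ℝ => 2 * (1 + z) ^ 2) (4 * (1 + y)) y := by
      have := (((hasDerivAt_id y).const_add 1).pow 2).const_mul 2
      refine this.congr_deriv ?_
      simp [id_eq]
      ring
    have h2 := h1.mul (hasDerivAt_log1p y hy)
    have h3 : HasDerivAt (fun z : ℝ => 2 * z + 3 * z ^ 2) (2 + 3 * (2 * y)) y := by
      have := ((hasDerivAt_id y).const_mul 2).add (((hasDerivAt_id y).pow 2).const_mul 3)
      refine this.congr_deriv ?_
      simp [id_eq]
    have h4 := h2.sub h3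
    have heq : 4 * (1 + y) * Real.log (1 + y) + 2 * (1 + y) ^ 2 * (1 / (1 + y))
        - (2 + 3 * (2 * y)) = 4 * (1 + y) * Real.log (1 + y) - 4 * y := by
      field_simp
      ring
    have h5 : h = fun z => 2 * (1 + z) ^ 2 * Real.log (1 + z) - (2 * z + 3 * z ^ 2) := by
      funext z; simp [hh]; ring
    rw [h5]
    rw [heq] at h4
    exact h4
  have hmono : StrictMonoOn h (Set.Ici 0) := by
    apply strictMonoOn_of_deriv_pos (convex_Ici 0)
    · intro y hy
      exact (hderiv y (by simp at hy; linarith)).continuousAt.continuousWithinAt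
    · intro y hy
      rw [interior_Ici] at hy
      have hy0 : 0 < y := hy
      rw [(hderiv y (by linarith)).deriv]
      have := log_gt_aux y hy0
      have h1y : (0:ℝ) < 1 + y := by linarith
      have : y < (1 + y) * Real.log (1 + y) := by
        rw [div_lt_iff₀ h1y] at this
        linarith [this]
      linarith
  have h0 : h 0 = 0 := by simp [hh]
  have := hmono (Set.self_mem_Ici) (Set.mem_Ici.mpr hx.le) hx
  rw [h0] at this
  simp only [hh] at this
  linarith

/-- For `π ≥ 2` and `f(τ) = π/(π-1)·ln(τ+1)/τ - 1/(π-1)·1/(τ+1)` and any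
covertness level `ε ∈ (0,1)`, there is a unique `τ_ε > 0` with
`f(τ_ε) = ε`, and for every `τ > 0` one has `f(τ) ≤ ε ↔ τ ≥ τ_ε`. -/
theorem stmt_13 (pi ε : ℝ) (hpi : 2 ≤ pi) (hε0 : 0 < ε) (hε1 : ε < 1)
    (f : ℝ → ℝ)
    (hf : ∀ tau : ℝ, f tau = pi / (pi - 1) * (Real.log (tau + 1) / tau)
        - 1 / (pi - 1) * (1 / (tau + 1))) :
    ∃ tauε : ℝ, 0 < tauε ∧ f tauε = ε ∧
      (∀ tau : ℝ, 0 < tau → (f tau ≤ ε ↔ tauε ≤ tau)) ∧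
      (∀ tau' : ℝ, 0 < tau' → f tau' = ε → tau' = tauε) := by
  have hfeq : f = fun tau => pi / (pi - 1) * (Real.log (tau + 1) / tau)
      - 1 / (pi - 1) * (1 / (tau + 1)) := funext hf
  subst hfeq
  set f : ℝ → ℝ := fun tau => pi / (pi - 1) * (Real.log (tau + 1) / tau)
      - 1 / (pi - 1) * (1 / (tau + 1)) with hfdef
  have hpi1 : (0:ℝ) < pi - 1 := by linarith
  -- derivative of f
  have fderiv : ∀ x : ℝ, 0 < x → HasDerivAt f
      ((pi * (x * (x + 1) - Real.log (x + 1) * (x + 1) ^ 2) + x ^ 2)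
        / ((pi - 1) * x ^ 2 * (x + 1) ^ 2)) x := by
    intro x hx
    have hx1 : (0:ℝ) < x + 1 := by linarith
    have hlog : HasDerivAt (fun y : ℝ => Real.log (y + 1)) (1 / (x + 1)) x := by
      have := hasDerivAt_log1p x (by linarith)
      simpa [add_comm] using this
    have hdiv : HasDerivAt (fun y : ℝ => Real.log (y + 1) / y)
        ((1 / (x + 1) * x - Real.log (x + 1) * 1) / x ^ 2) x :=
      hlog.div (hasDerivAt_id x) hx.ne'
    have hinv : HasDerivAt (fun y : ℝ => 1 / (y + 1)) (-1 / (x + 1) ^ 2) x := by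
      have h1 : HasDerivAt (fun y : ℝ => y + 1) 1 x := (hasDerivAt_id x).add_const 1
      have := h1.inv hx1.ne'
      simpa [one_div, Pi.inv_def] using this
    have h := (hdiv.const_mul (pi / (pi - 1))).sub (hinv.const_mul (1 / (pi - 1)))
    refine h.congr_deriv ?_
    field_simp
    ring
  -- derivative is negative
  have Dneg : ∀ x : ℝ, 0 < x →
      (pi * (x * (x + 1) - Real.log (x + 1) * (x + 1) ^ 2) + x ^ 2)
        / ((pi - 1) * x ^ 2 * (x + 1) ^ 2) < 0 := by
    intro x hx
    apply div_neg_of_neg_of_pos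
    · have hkey := key_ineq x hx
      set L := Real.log (1 + x) with hL
      have hL' : Real.log (x + 1) = L := by rw [hL, add_comm]
      rw [hL']
      have hA : x * (x + 1) - L * (x + 1) ^ 2 < -(x ^ 2) / 2 := by nlinarith [hkey]
      have hAneg : x * (x + 1) - L * (x + 1) ^ 2 < 0 := by nlinarith [hA, sq_nonneg x]
      nlinarith [mul_nonneg (by linarith : (0:ℝ) ≤ pi - 2)
        (by linarith : (0:ℝ) ≤ -(x * (x + 1) - L * (x + 1) ^ 2))]
    · positivity
  -- strict antitone
  have hanti : StrictAntiOn f (Set.Ioi 0) := by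
    apply strictAntiOn_of_deriv_neg (convex_Ioi 0)
    · intro y hy
      exact (fderiv y hy).continuousAt.continuousWithinAt
    · intro y hy
      rw [interior_Ioi] at hy
      rw [(fderiv y hy).deriv]
      exact Dneg y hy
  -- lower bound : 1/(x+1) < f x
  have flb : ∀ x : ℝ, 0 < x → 1 / (x + 1) < f x := by
    intro x hx
    have hx1 : (0:ℝ) < x + 1 := by linarith
    have hlg := log_gt_aux x hx
    have hnum : 0 < Real.log (x + 1) * (x + 1) - x := by
      rw [div_lt_iff₀ (by linarith)] at hlg
      rw [add_comm 1 x] at hlg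
      linarith
    have heq : f x - 1 / (x + 1)
        = pi * (Real.log (x + 1) * (x + 1) - x) / ((pi - 1) * (x * (x + 1))) := by
      simp only [hfdef]
      field_simp
      ring
    have hpos : 0 < pi * (Real.log (x + 1) * (x + 1) - x) / ((pi - 1) * (x * (x + 1))) := by
      apply div_pos (mul_pos (by linarith) hnum) (by positivity)
    linarith [heq ▸ hpos]
  -- find T with f T < ε
  have hten : Tendsto (fun x : ℝ => Real.log x / x) atTop (nhds 0) :=
    Real.isLittleO_log_id_atTop.tendsto_div_nhds_zero
  have h2 : Tendsto (fun x : ℝ => Real.log (x + 1) / (x + 1)) atTop (nhds 0) :=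
    hten.comp (tendsto_atTop_add_const_right _ 1 tendsto_id)
  have h3 : Tendsto (fun x : ℝ => 4 * (Real.log (x + 1) / (x + 1))) atTop (nhds 0) := by
    simpa using h2.const_mul 4
  have h4 : ∀ᶠ x : ℝ in atTop, 4 * (Real.log (x + 1) / (x + 1)) < ε :=
    h3.eventually_lt_const hε0
  obtain ⟨T, hT1, hTb⟩ := (eventually_ge_atTop (1:ℝ)).and h4 |>.exists
  have hT0 : (0:ℝ) < T := by linarith
  have hT10 : (0:ℝ) < T + 1 := by linarith
  have hL0 : 0 ≤ Real.log (T + 1) := Real.log_nonneg (by linarith)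
  have hfT : f T < ε := by
    have e1 : Real.log (T + 1) / T ≤ 2 * (Real.log (T + 1) / (T + 1)) := by
      rw [div_le_iff₀ hT0]
      have : 2 * (Real.log (T + 1) / (T + 1)) * T
          = Real.log (T + 1) * (2 * T / (T + 1)) := by ring
      rw [this]
      have h2T : 1 ≤ 2 * T / (T + 1) := by
        rw [le_div_iff₀ hT10]; linarith
      nlinarith [hL0, h2T]
    have e2 : pi / (pi - 1) ≤ 2 := by
      rw [div_le_iff₀ hpi1]; linarith
    have e3 : pi / (pi - 1) * (Real.log (T + 1) / T) ≤ 2 * (Real.log (T + 1) / T) := by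
      apply mul_le_mul_of_nonneg_right e2 (div_nonneg hL0 hT0.le)
    have e4 : 2 * (Real.log (T + 1) / T) ≤ 4 * (Real.log (T + 1) / (T + 1)) := by
      linarith [e1]
    have e5 : 0 < 1 / (pi - 1) * (1 / (T + 1)) := by positivity
    simp only [hfdef]
    linarith [hTb, e3, e4, e5]
  -- find s with ε < f s
  set s : ℝ := (1 - ε) / (2 * ε) with hsdef
  have hs0 : 0 < s := by
    apply div_pos (by linarith) (by linarith)
  have hεs : ε < 1 / (s + 1) := by
    rw [lt_div_iff₀ (by linarith)]
    have : ε * (s + 1) = (1 - ε) / 2 + ε := by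
      rw [hsdef]
      field_simp
    rw [this]
    linarith
  have hfs : ε < f s := lt_trans hεs (flb s hs0)
  -- s < T
  have hsT : s < T := by
    by_contra hc
    push_neg at hc
    rcases eq_or_lt_of_le hc with h | h
    · rw [h] at hfT; linarith
    · have := hanti (Set.mem_Ioi.mpr hT0) (Set.mem_Ioi.mpr hs0) h
      linarith
  -- IVT
  have hcont : ContinuousOn f (Set.Icc s T) := by
    intro y hy
    exact (fderiv y (lt_of_lt_of_le hs0 hy.1)).continuousAt.continuousWithinAt
  have hmem : ε ∈ Set.Icc (f T) (f s) := ⟨hfT.le, hfs.le⟩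
  obtain ⟨tauε, htmem, htval⟩ := intermediate_value_Icc' hsT.le hcont hmem
  have ht0 : 0 < tauε := lt_of_lt_of_le hs0 htmem.1
  refine ⟨tauε, ht0, htval, ?_, ?_⟩
  · intro tau htau
    constructor
    · intro hle
      by_contra hc
      push_neg at hc
      have := hanti (Set.mem_Ioi.mpr htau) (Set.mem_Ioi.mpr ht0) hc
      rw [htval] at this
      linarith
    · intro hge
      rcases eq_or_lt_of_le hge with h | h
      · rw [← h, htval]
      · have := hanti (Set.mem_Ioi.mpr ht0) (Set.mem_Ioi.mpr htau) h
        rw [htval] at this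
        linarith
  · intro tau' htau' hval'
    rcases lt_trichotomy tau' tauε with h | h | h
    · have := hanti (Set.mem_Ioi.mpr htau') (Set.mem_Ioi.mpr ht0) h
      rw [htval, hval'] at this
      linarith
    · exact h
    · have := hanti (Set.mem_Ioi.mpr ht0) (Set.mem_Ioi.mpr htau') h
      rw [htval, hval'] at this
      linarith
end
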